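/- arXiv:2001.08493 — 3 statements merged into one kernel-verified Lean document; each statement's English description precedes it below -/
import Mathlib

section
/- If C is a maximal finite clique in the contact graph of a CAT(0) cube complex X, then there exists a vertex v of X with C = W_v, the set of hyperplanes adjacent to v. -/
open SimpleGraph

variable {V : Type*}

/-- A median graph: combinatorial model of (the 1-skeleton of) a CAT(0) cube complex. -/
def IsMedianGraph (G : SimpleGraph V) : Prop :=
  G.Connected ∧ ∀ x y z : V, ∃! m : V,
    G.dist x m + G.dist m y = G.dist x y ∧
    G.dist x m + G.dist m z = G.dist x z ∧
    G.dist y m + G.dist m z = G.dist y z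

/-- Djoković–Winkler relation on oriented edges of a median graph; hyperplanes are its classes. -/
def Theta (G : SimpleGraph V) (e f : V × V) : Prop :=
  G.dist e.1 f.1 + G.dist e.2 f.2 ≠ G.dist e.1 f.2 + G.dist e.2 f.1

/-- A hyperplane, identified with the set of (oriented) edges crossing it. -/
def IsHyperplane (G : SimpleGraph V) (h : Set (V × V)) : Prop :=
  ∃ e : V × V, G.Adj e.1 e.2 ∧ h = {f | G.Adj f.1 f.2 ∧ Theta G e f}

/-- The hyperplane `h` is adjacent to the vertex `v` (i.e. `v` lies in the carrier of `h`). -/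
def AdjTo (G : SimpleGraph V) (h : Set (V × V)) (v : V) : Prop :=
  ∃ e ∈ h, e.1 = v ∨ e.2 = v

/-- `Wv G v`: the set of hyperplanes adjacent to `v`. -/
def Wv (G : SimpleGraph V) (v : V) : Set (Set (V × V)) :=
  {h | IsHyperplane G h ∧ AdjTo G h v}

/-- Two hyperplanes are in contact if their carriers share a vertex. -/
def Contact (G : SimpleGraph V) (h h' : Set (V × V)) : Prop :=
  ∃ v : V, AdjTo G h v ∧ AdjTo G h' v

/-- Two hyperplanes are transverse if they cross a common square. -/
def Transverse (G : SimpleGraph V) (h h' : Set (V × V)) : Prop :=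
  ∃ a b c d : V, (a, b) ∈ h ∧ (c, d) ∈ h ∧ (a, c) ∈ h' ∧ (b, d) ∈ h' ∧
    G.Adj a b ∧ G.Adj c d ∧ G.Adj a c ∧ G.Adj b d

/-- A clique in the contact graph: a set of hyperplanes whose carriers pairwise intersect. -/
def IsContactClique (G : SimpleGraph V) (C : Set (Set (V × V))) : Prop :=
  (∀ h ∈ C, IsHyperplane G h) ∧ ∀ h ∈ C, ∀ h' ∈ C, h ≠ h' → Contact G h h'

/-- A maximal clique in the contact graph. -/
def IsMaxContactClique (G : SimpleGraph V) (C : Set (Set (V × V))) : Prop :=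
  IsContactClique G C ∧ ∀ C', IsContactClique G C' → C ⊆ C' → C' = C

/-- The link of `v` is a cone, i.e. `v` is an extremal vertex. -/
def LinkIsCone (G : SimpleGraph V) (v : V) : Prop :=
  ∃ h ∈ Wv G v, ∀ h' ∈ Wv G v, h' ≠ h → Transverse G h h'

/-- Uniform local finiteness. -/
def UnifLocFinite (G : SimpleGraph V) : Prop :=
  ∃ N : ℕ, ∀ v : V, (G.neighborSet v).Finite ∧ (G.neighborSet v).ncard ≤ N

abbrev Hyp (G : SimpleGraph V) := {h : Set (V × V) // IsHyperplane G h}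

/-- The contact graph `𝒞(X)`. -/
def contactGraph (G : SimpleGraph V) : SimpleGraph (Hyp G) where
  Adj h h' := h ≠ h' ∧ Contact G h.1 h'.1
  symm := ⟨by
    rintro h h' ⟨hne, v, hv, hv'⟩
    exact ⟨hne.symm, v, hv', hv⟩⟩
  loopless := ⟨by rintro h ⟨hne, -⟩; exact hne rfl⟩

/-- `Ical G w` = I(w): the hyperplanes whose carrier contains the carrier of `w`,
i.e. the intersection of the sets `Wv G v` over all vertices `v` adjacent to `w`. -/
def Ical (G : SimpleGraph V) (w : Set (V × V)) : Set (Set (V × V)) :=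
  {u | IsHyperplane G u ∧ ∀ v : V, AdjTo G w v → AdjTo G u v}

/-- `Ical0 G w` = I⁰(w): the hyperplanes with the same carrier as `w`. -/
def Ical0 (G : SimpleGraph V) (w : Set (V × V)) : Set (Set (V × V)) :=
  {u | u ∈ Ical G w ∧ w ∈ Ical G u}

/-- The action of a cubical automorphism on sets of edges (e.g. hyperplanes). -/
def hmap (G : SimpleGraph V) (φ : G ≃g G) (h : Set (V × V)) : Set (V × V) :=
  (fun e : V × V => (φ e.1, φ e.2)) '' h

/-- `π` is the vertex permutation induced by the contact-graph automorphism `ψ` via the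
correspondence between vertices and maximal cliques (`ρ(ψ) = π`). -/
def InducesPerm (G : SimpleGraph V) (ψ : contactGraph G ≃g contactGraph G)
    (π : Equiv.Perm V) : Prop :=
  ∀ (v : V) (h : Hyp G), h.1 ∈ Wv G v ↔ (ψ h).1 ∈ Wv G (π v)

/-- The hyperplane `u` is adjacent, inside the cube complex structure of a hyperplane `w`,
to the vertex of `w` given by the edge `e ∈ w`: `u` crosses a square containing `e`. -/
def HypAdjEdge (G : SimpleGraph V) (u : Set (V × V)) (e : V × V) : Prop :=
  ∃ c d : V, (e.1, c) ∈ u ∧ (e.2, d) ∈ u ∧ G.Adj c d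

/-- The link, in the cube complex structure of hyperplane `w`, of the vertex given by
`e ∈ w` is a cone (i.e. this vertex of `w` is extremal). -/
def HypLinkCone (G : SimpleGraph V) (w : Set (V × V)) (e : V × V) : Prop :=
  ∃ u, IsHyperplane G u ∧ u ≠ w ∧ HypAdjEdge G u e ∧
    ∀ u', IsHyperplane G u' → u' ≠ w → HypAdjEdge G u' e → u' ≠ u → Transverse G u u'

/-- No hyperplane of `X` has an extremal vertex. -/
def NoHypExtremalVertex (G : SimpleGraph V) : Prop :=
  ∀ w, IsHyperplane G w → ∀ e ∈ w, ¬ HypLinkCone G w e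

namespace MGAux

variable {V : Type*} {G : SimpleGraph V}

/-- betweenness -/
def Btw (G : SimpleGraph V) (x m y : V) : Prop :=
  G.dist x m + G.dist m y = G.dist x y

lemma med (hG : IsMedianGraph G) (x y z : V) :
    ∃ m, Btw G x m y ∧ Btw G x m z ∧ Btw G y m z :=
  (hG.2 x y z).exists

/-- halfspace: vertices strictly closer to `a` than to `b` -/
def Hs (G : SimpleGraph V) (a b : V) : Set V := {x | G.dist x b = G.dist x a + 1}

lemma mem_Hs {a b x : V} : x ∈ Hs G a b ↔ G.dist x b = G.dist x a + 1 := Iff.rfl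

lemma dist_one_adj {x y : V} (h : G.dist x y = 1) : G.Adj x y :=
  SimpleGraph.dist_eq_one_iff_adj.mp h

lemma adj_dist_one {x y : V} (h : G.Adj x y) : G.dist x y = 1 :=
  SimpleGraph.dist_eq_one_iff_adj.mpr h

lemma eq_of_dist_zero (hc : G.Connected) {x y : V} (h : G.dist x y = 0) : x = y :=
  hc.dist_eq_zero_iff.mp h

lemma eq_of_dist_zero' (hc : G.Connected) {x y : V} (h : G.dist x y = 0) : y = x :=
  (hc.dist_eq_zero_iff.mp h).symm

/-- Lemma A: along an edge, distances to any vertex differ by exactly one. -/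
lemma step (hG : IsMedianGraph G) {x y : V} (hxy : G.Adj x y) (z : V) :
    G.dist z x + 1 = G.dist z y ∨ G.dist z y + 1 = G.dist z x := by
  obtain ⟨m, h1, h2, h3⟩ := med hG z x y
  unfold Btw at h1 h2 h3
  rw [adj_dist_one hxy] at h3
  have hcase : G.dist x m = 0 ∨ G.dist m y = 0 := by omega
  rcases hcase with h | h
  · have hmx : m = x := eq_of_dist_zero' hG.1 h
    rw [hmx] at h2
    left
    rw [adj_dist_one hxy] at h2
    omega
  · have hmy : m = y := eq_of_dist_zero hG.1 h
    rw [hmy] at h1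
    right
    have hyx : G.dist y x = 1 := by rw [SimpleGraph.dist_comm]; exact adj_dist_one hxy
    rw [hyx] at h1
    omega

/-- dichotomy: every vertex is on one side of an edge -/
lemma mem_or (hG : IsMedianGraph G) {a b : V} (hab : G.Adj a b) (x : V) :
    x ∈ Hs G a b ∨ x ∈ Hs G b a := by
  rcases step hG hab x with h | h
  · exact Or.inl (mem_Hs.mpr h.symm)
  · exact Or.inr (mem_Hs.mpr h.symm)

lemma not_both {a b x : V} (h1 : x ∈ Hs G a b) (h2 : x ∈ Hs G b a) : False := by
  rw [mem_Hs] at h1 h2; omega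

lemma not_mem_iff (hG : IsMedianGraph G) {a b : V} (hab : G.Adj a b) (x : V) :
    x ∉ Hs G a b ↔ x ∈ Hs G b a := by
  constructor
  · intro h; rcases mem_or hG hab x with h' | h'
    · exact absurd h' h
    · exact h'
  · intro h h'; exact not_both h' h

/-- crossing edge lemma -/
lemma cross (hG : IsMedianGraph G) {a b u w : V} (hab : G.Adj a b) (huw : G.Adj u w)
    (hu : u ∈ Hs G a b) (hw : w ∈ Hs G b a) :
    G.dist u a + 1 = G.dist w a ∧ G.dist w b + 1 = G.dist u b := by
  rw [mem_Hs] at hu hw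
  have h3 := step hG huw a
  have h4 := step hG huw b
  have c1 : G.dist a u = G.dist u a := SimpleGraph.dist_comm
  have c2 : G.dist a w = G.dist w a := SimpleGraph.dist_comm
  have c3 : G.dist b u = G.dist u b := SimpleGraph.dist_comm
  have c4 : G.dist b w = G.dist w b := SimpleGraph.dist_comm
  rcases h3 with h3 | h3 <;> rcases h4 with h4 | h4 <;> omega

/-- quadrangle condition -/
lemma qc (hG : IsMedianGraph G) {x y c : V} (hxy : G.dist x y = 2) {k : ℕ}
    (hx : G.dist c x = k) (hy : G.dist c y = k) :
    ∃ m, G.Adj x m ∧ G.Adj m y ∧ G.dist c m + 1 = k := by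
  obtain ⟨m, h1, h2, h3⟩ := med hG x y c
  unfold Btw at h1 h2 h3
  rw [hxy] at h1
  have cx : G.dist x c = k := by rw [SimpleGraph.dist_comm]; exact hx
  have cy : G.dist y c = k := by rw [SimpleGraph.dist_comm]; exact hy
  rw [cx] at h2; rw [cy] at h3
  have hxm : G.dist x m ≠ 0 := by
    intro h0
    have hmx : m = x := eq_of_dist_zero' hG.1 h0
    rw [hmx] at h3
    have hyx : G.dist y x = 2 := by rw [SimpleGraph.dist_comm]; exact hxy
    omega
  have hmy : G.dist m y ≠ 0 := by
    intro h0
    have hmy' : m = y := eq_of_dist_zero hG.1 h0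
    rw [hmy'] at h2
    omega
  have e1 : G.dist x m = 1 := by omega
  have e2 : G.dist m y = 1 := by omega
  refine ⟨m, dist_one_adj e1, dist_one_adj e2, ?_⟩
  have : G.dist c m = G.dist m c := SimpleGraph.dist_comm
  omega

/-- no vertex outside a halfspace has two distinct neighbours inside it
    (key local convexity fact) -/
lemma nodouble (hG : IsMedianGraph G) {a b u v z : V} (hab : G.Adj a b)
    (hzu : G.Adj z u) (hzv : G.Adj z v) (huv : u ≠ v)
    (hu : u ∈ Hs G a b) (hv : v ∈ Hs G a b) (hz : z ∈ Hs G b a) : False := by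
  have hconn := hG.1
  obtain ⟨cu1, cu2⟩ := cross hG hab hzu.symm hu hz
  obtain ⟨cv1, cv2⟩ := cross hG hab hzv.symm hv hz
  rw [mem_Hs] at hu hv hz
  -- distances
  have dzu : G.dist z u = 1 := adj_dist_one hzu
  have dzv : G.dist z v = 1 := adj_dist_one hzv
  have duv : G.dist u v = 2 := by
    have hle : G.dist u v ≤ 2 := by
      have := hconn.dist_triangle (u := u) (v := z) (w := v)
      have cz : G.dist u z = 1 := by rw [SimpleGraph.dist_comm]; exact dzu
      omega
    have hne0 : G.dist u v ≠ 0 := fun h => huv (eq_of_dist_zero hconn h)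
    have hne1 : G.dist u v ≠ 1 := by
      intro h1
      rcases step hG (dist_one_adj h1) a with h | h <;>
      · have c1 : G.dist a u = G.dist u a := SimpleGraph.dist_comm
        have c2 : G.dist a v = G.dist v a := SimpleGraph.dist_comm
        omega
    omega
  -- median of u v a
  obtain ⟨m, m1, m2, m3⟩ := med hG u v a
  unfold Btw at m1 m2 m3
  rw [duv] at m1
  have hmu : G.dist u m ≠ 0 := by
    intro h0
    have hm : m = u := eq_of_dist_zero' hconn h0
    rw [hm] at m3
    have cvu : G.dist v u = G.dist u v := SimpleGraph.dist_comm
    omega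
  have hmv : G.dist m v ≠ 0 := by
    intro h0
    have hm : m = v := eq_of_dist_zero hconn h0
    rw [hm] at m2
    omega
  have dum : G.dist u m = 1 := by omega
  have dmv : G.dist m v = 1 := by omega
  have dma : G.dist m a + 1 = G.dist u a := by omega
  -- dist m b = dist u a
  have dmb : G.dist m b = G.dist u a := by
    have htr : G.dist m b ≤ G.dist m a + G.dist a b := hconn.dist_triangle
    rw [adj_dist_one hab] at htr
    have hst := step hG (dist_one_adj dum).symm b
    have c1 : G.dist b m = G.dist m b := SimpleGraph.dist_comm
    have c2 : G.dist b u = G.dist u b := SimpleGraph.dist_comm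
    rcases hst with h | h <;> omega
  -- m ≠ z, non adjacent, dist 2
  have dmz : G.dist m z = 2 := by
    have hle : G.dist m z ≤ 2 := by
      have := hconn.dist_triangle (u := m) (v := u) (w := z)
      have cz : G.dist u z = 1 := by rw [SimpleGraph.dist_comm]; exact dzu
      have : G.dist m u = 1 := by rw [SimpleGraph.dist_comm]; exact dum
      omega
    have hne0 : G.dist m z ≠ 0 := by
      intro h0
      have hm : m = z := eq_of_dist_zero hconn h0
      rw [hm] at dma
      omega
    have hne1 : G.dist m z ≠ 1 := by
      intro h1
      rcases step hG (dist_one_adj h1) a with h | h <;>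
      · have c1 : G.dist a m = G.dist m a := SimpleGraph.dist_comm
        have c2 : G.dist a z = G.dist z a := SimpleGraph.dist_comm
        omega
    omega
  -- median of m z b : vertex t
  obtain ⟨t, t1, t2, t3⟩ := med hG m z b
  unfold Btw at t1 t2 t3
  have hmt : G.dist m t ≠ 0 := by
    intro h0
    have ht : t = m := eq_of_dist_zero' hconn h0
    rw [ht] at t3
    have czm : G.dist z m = G.dist m z := SimpleGraph.dist_comm
    omega
  have htz : G.dist t z ≠ 0 := by
    intro h0
    have ht : t = z := eq_of_dist_zero hconn h0
    rw [ht] at t2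
    omega
  have dmt : G.dist m t = 1 := by omega
  have dtz : G.dist t z = 1 := by omega
  have dtb : G.dist t b + 1 = G.dist u a := by omega
  -- distances from u, v to t are 2
  have dut : G.dist u t = 2 := by
    have hle : G.dist u t ≤ 2 := by
      have h1 := hconn.dist_triangle (u := u) (v := m) (w := t)
      omega
    have hne0 : G.dist u t ≠ 0 := by
      intro h0
      have ht : u = t := eq_of_dist_zero hconn h0
      rw [← ht] at dtb
      omega
    have hne1 : G.dist u t ≠ 1 := by
      intro h1
      rcases step hG (dist_one_adj h1) b with h | h <;>
      · have c1 : G.dist b u = G.dist u b := SimpleGraph.dist_comm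
        have c2 : G.dist b t = G.dist t b := SimpleGraph.dist_comm
        omega
    omega
  have dvt : G.dist v t = 2 := by
    have hle : G.dist v t ≤ 2 := by
      have h1 := hconn.dist_triangle (u := v) (v := m) (w := t)
      have : G.dist v m = 1 := by rw [SimpleGraph.dist_comm]; exact dmv
      omega
    have hne0 : G.dist v t ≠ 0 := by
      intro h0
      have ht : v = t := eq_of_dist_zero hconn h0
      rw [← ht] at dtb
      omega
    have hne1 : G.dist v t ≠ 1 := by
      intro h1
      rcases step hG (dist_one_adj h1) b with h | h <;>
      · have c1 : G.dist b v = G.dist v b := SimpleGraph.dist_comm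
        have c2 : G.dist b t = G.dist t b := SimpleGraph.dist_comm
        omega
    omega
  -- both m and z are medians of (u, v, t)
  have hmmed : G.dist u m + G.dist m v = G.dist u v ∧
      G.dist u m + G.dist m t = G.dist u t ∧ G.dist v m + G.dist m t = G.dist v t := by
    have : G.dist v m = 1 := by rw [SimpleGraph.dist_comm]; exact dmv
    refine ⟨by omega, by omega, by omega⟩
  have hzmed : G.dist u z + G.dist z v = G.dist u v ∧
      G.dist u z + G.dist z t = G.dist u t ∧ G.dist v z + G.dist z t = G.dist v t := by
    have c1 : G.dist u z = 1 := by rw [SimpleGraph.dist_comm]; exact dzu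
    have c2 : G.dist v z = 1 := by rw [SimpleGraph.dist_comm]; exact dzv
    have c3 : G.dist z t = 1 := by rw [SimpleGraph.dist_comm]; exact dtz
    refine ⟨by omega, by omega, by omega⟩
  have hfin : m = z := (hG.2 u v t).unique hmmed hzmed
  rw [hfin] at dma
  omega


/-- geodesic sequences -/
def IsGeo (G : SimpleGraph V) (n : ℕ) (f : ℕ → V) : Prop :=
  (∀ i, i < n → G.Adj (f i) (f (i+1))) ∧ G.dist (f 0) (f n) = n

lemma geo_le (hc : G.Connected) {n : ℕ} {f : ℕ → V}
    (hadj : ∀ i, i < n → G.Adj (f i) (f (i+1))) :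
    ∀ i k, i + k ≤ n → G.dist (f i) (f (i + k)) ≤ k := by
  intro i k
  induction k with
  | zero => intro _; simp [SimpleGraph.dist_self]
  | succ k ih =>
    intro hk
    have h1 : G.dist (f i) (f (i + k + 1)) ≤ G.dist (f i) (f (i + k)) + G.dist (f (i + k)) (f (i + k + 1)) :=
      hc.dist_triangle
    have h2 : G.dist (f (i + k)) (f (i + k + 1)) = 1 := adj_dist_one (hadj (i + k) (by omega))
    have h3 := ih (by omega)
    have : i + (k + 1) = i + k + 1 := by omega
    rw [this]
    omega

lemma geo_dist (hc : G.Connected) {n : ℕ} {f : ℕ → V} (hf : IsGeo G n f)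
    {i j : ℕ} (hij : i ≤ j) (hj : j ≤ n) : G.dist (f i) (f j) + i = j := by
  obtain ⟨hadj, hd⟩ := hf
  have h1 : G.dist (f 0) (f i) ≤ i := by
    have := geo_le hc hadj 0 i (by omega)
    simpa using this
  have h2 : G.dist (f i) (f j) ≤ j - i := by
    have := geo_le hc hadj i (j - i) (by omega)
    have e : i + (j - i) = j := by omega
    rwa [e] at this
  have h3 : G.dist (f j) (f n) ≤ n - j := by
    have := geo_le hc hadj j (n - j) (by omega)
    have e : j + (n - j) = n := by omega
    rwa [e] at this
  have t1 : G.dist (f 0) (f n) ≤ G.dist (f 0) (f i) + G.dist (f i) (f n) := hc.dist_triangle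
  have t2 : G.dist (f i) (f n) ≤ G.dist (f i) (f j) + G.dist (f j) (f n) := hc.dist_triangle
  omega

lemma exists_geo (hc : G.Connected) (u v : V) :
    ∃ f : ℕ → V, IsGeo G (G.dist u v) f ∧ f 0 = u ∧ f (G.dist u v) = v := by
  obtain ⟨p, hp⟩ := hc.exists_walk_length_eq_dist u v
  refine ⟨p.getVert, ⟨fun i hi => p.adj_getVert_succ (by omega), ?_⟩, p.getVert_zero, ?_⟩
  · rw [p.getVert_zero, ← hp, p.getVert_length]
    exact hp.symm
  · rw [← hp, p.getVert_length]

lemma exists_geo_thru (hc : G.Connected) {u z v : V} (h : Btw G u z v) :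
    ∃ f : ℕ → V, IsGeo G (G.dist u v) f ∧ f 0 = u ∧ f (G.dist u v) = v ∧
      f (G.dist u z) = z := by
  obtain ⟨f1, hf1, h10, h11⟩ := exists_geo hc u z
  obtain ⟨f2, hf2, h20, h21⟩ := exists_geo hc z v
  set n1 := G.dist u z with hn1
  set n2 := G.dist z v with hn2
  have hn : n1 + n2 = G.dist u v := h
  set f : ℕ → V := fun i => if i ≤ n1 then f1 i else f2 (i - n1) with hfdef
  have hfn1 : f n1 = z := by simp only [hfdef, le_refl, if_pos]; exact h11
  have hadj : ∀ i, i < n1 + n2 → G.Adj (f i) (f (i+1)) := by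
    intro i hi
    by_cases h1 : i + 1 ≤ n1
    · have h0 : i ≤ n1 := by omega
      simp only [hfdef, if_pos h0, if_pos h1]
      exact hf1.1 i (by omega)
    · by_cases h2 : i ≤ n1
      · -- i = n1
        have he : i = n1 := by omega
        have : f (i + 1) = f2 ((i+1) - n1) := by simp only [hfdef, if_neg h1]
        rw [this, he, hfn1]
        have e1 : n1 + 1 - n1 = 1 := by omega
        rw [e1, ← h20]
        exact hf2.1 0 (by omega)
      · have e1 : (i + 1) - n1 = (i - n1) + 1 := by omega
        simp only [hfdef, if_neg h1, if_neg h2, e1]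
        exact hf2.1 (i - n1) (by omega)
  have hf0 : f 0 = u := by
    simp only [hfdef, if_pos (Nat.zero_le n1)]; exact h10
  have hfn : f (n1 + n2) = v := by
    by_cases h2 : n2 = 0
    · have hzv : z = v := eq_of_dist_zero hc (by rw [← hn2, h2])
      simp only [hfdef, h2, Nat.add_zero, le_refl, if_pos]
      rw [h11, hzv]
    · have : ¬ (n1 + n2 ≤ n1) := by omega
      simp only [hfdef, if_neg this]
      have e : n1 + n2 - n1 = n2 := by omega
      rw [e]; exact h21
  refine ⟨f, ⟨?_, ?_⟩, ?_, ?_, ?_⟩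
  · rw [← hn]; exact hadj
  · rw [hf0, ← hn, hfn]; exact hn.symm
  · exact hf0
  · rw [← hn]; exact hfn
  · exact hfn1


/-- geodesics between two vertices of a halfspace stay in the halfspace -/
lemma geo_side (hG : IsMedianGraph G) {a b : V} (hab : G.Adj a b) :
    ∀ n : ℕ, ∀ S : ℕ, ∀ f : ℕ → V, IsGeo G n f →
      (∑ i ∈ Finset.range (n+1), G.dist a (f i)) = S →
      f 0 ∈ Hs G a b → f n ∈ Hs G a b → ∀ i, i ≤ n → f i ∈ Hs G a b := by
  classical
  have hconn := hG.1
  intro n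
  induction n using Nat.strong_induction_on with
  | _ n IHn =>
  intro S
  induction S using Nat.strong_induction_on with
  | _ S IHS =>
  intro f hf hS h0 hn i hi
  by_contra hbad
  have hPex : ∃ j, j ≤ n ∧ f j ∉ Hs G a b := ⟨i, hi, hbad⟩
  set i0 := Nat.find hPex with hi0def
  obtain ⟨hi0n, hi0bad⟩ := Nat.find_spec hPex
  rw [← hi0def] at hi0n hi0bad
  have hmin : ∀ j, j < i0 → j ≤ n → f j ∈ Hs G a b := by
    intro j hj hjn
    by_contra hc
    exact Nat.find_min hPex hj ⟨hjn, hc⟩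
  have hi0pos : 1 ≤ i0 := by
    rcases Nat.eq_zero_or_pos i0 with h | h
    · rw [h] at hi0bad; exact absurd h0 hi0bad
    · exact h
  have hQex : ∃ j, i0 < j ∧ j ≤ n ∧ f j ∈ Hs G a b := by
    refine ⟨n, ?_, le_refl n, hn⟩
    rcases Nat.lt_or_ge i0 n with h | h
    · exact h
    · exfalso
      have he : i0 = n := by omega
      rw [he] at hi0bad; exact hi0bad hn
  set j0 := Nat.find hQex with hj0def
  obtain ⟨hj0gt, hj0n, hj0in⟩ := Nat.find_spec hQex
  rw [← hj0def] at hj0gt hj0n hj0in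
  have hout : ∀ l, i0 ≤ l → l < j0 → f l ∉ Hs G a b := by
    intro l h1 h2
    rcases Nat.eq_or_lt_of_le h1 with he | hlt
    · rw [← he]; exact hi0bad
    · intro hc
      exact Nat.find_min hQex h2 ⟨hlt, by omega, hc⟩
  rcases Nat.eq_or_lt_of_le (show i0 + 1 ≤ j0 by omega) with hj1 | hj2
  · -- j0 = i0 + 1 : contradiction by nodouble
    obtain ⟨i1, hi1⟩ : ∃ i1, i0 = i1 + 1 := ⟨i0 - 1, by omega⟩
    have hadj1 : G.Adj (f i0) (f i1) := by
      have h := hf.1 i1 (by omega)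
      rw [← hi1] at h
      exact h.symm
    have hadj2 : G.Adj (f i0) (f j0) := by
      have h := hf.1 i0 (by omega)
      rw [hj1] at h
      exact h
    have hne : f i1 ≠ f j0 := by
      have hd := geo_dist hconn hf (show i1 ≤ j0 by omega) hj0n
      intro heq
      rw [heq, SimpleGraph.dist_self] at hd
      omega
    exact nodouble hG hab hadj1 hadj2 hne (hmin i1 (by omega) (by omega)) hj0in
      ((not_mem_iff hG hab _).mp hi0bad)
  · -- j0 ≥ i0 + 2
    have hRex : ∃ l, i0 ≤ l ∧ l + 1 ≤ j0 ∧ G.dist a (f (l+1)) + 1 = G.dist a (f l) := by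
      obtain ⟨j1, hj1⟩ : ∃ j1, j0 = j1 + 1 := ⟨j0 - 1, by omega⟩
      refine ⟨j1, by omega, by omega, ?_⟩
      have hout1 : f j1 ∈ Hs G b a := (not_mem_iff hG hab _).mp (hout j1 (by omega) (by omega))
      have hadj : G.Adj (f j1) (f (j1+1)) := hf.1 j1 (by omega)
      rw [← hj1] at hadj
      obtain ⟨c1, c2⟩ := cross hG hab hadj.symm hj0in hout1
      have e1 : G.dist a (f j0) = G.dist (f j0) a := SimpleGraph.dist_comm
      have e2 : G.dist a (f j1) = G.dist (f j1) a := SimpleGraph.dist_comm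
      rw [← hj1]
      omega
    set l := Nat.find hRex with hldef
    obtain ⟨hli0, hlj0, hldesc⟩ := Nat.find_spec hRex
    rw [← hldef] at hli0 hlj0 hldesc
    obtain ⟨l1, hl1⟩ : ∃ l1, l = l1 + 1 := ⟨l - 1, by omega⟩
    have hadjl : G.Adj (f l1) (f l) := by
      have h := hf.1 l1 (by omega)
      rw [← hl1] at h
      exact h
    have hasc : G.dist a (f l1) + 1 = G.dist a (f l) := by
      rcases Nat.eq_or_lt_of_le hli0 with he | hlt
      · have hl1in : f l1 ∈ Hs G a b := hmin l1 (by omega) (by omega)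
        have hlout : f l ∈ Hs G b a := (not_mem_iff hG hab _).mp (hout l (by omega) (by omega))
        obtain ⟨c1, _⟩ := cross hG hab hadjl hl1in hlout
        have e1 : G.dist a (f l) = G.dist (f l) a := SimpleGraph.dist_comm
        have e2 : G.dist a (f l1) = G.dist (f l1) a := SimpleGraph.dist_comm
        omega
      · have hnd := Nat.find_min hRex (show l1 < l by omega)
        rcases step hG hadjl a with h | h
        · exact h
        · exfalso
          refine hnd ⟨by omega, by omega, ?_⟩
          rw [← hl1]
          exact h
    have heq : G.dist a (f (l+1)) = G.dist a (f l1) := by omega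
    have hd2 : G.dist (f l1) (f (l+1)) = 2 := by
      have h := geo_dist hconn hf (show l1 ≤ l + 1 by omega) (show l + 1 ≤ n by omega)
      omega
    obtain ⟨m, hm1, hm2, hm3⟩ := qc hG hd2 (rfl : G.dist a (f l1) = _) heq
    have hlne0 : l ≠ 0 := by omega
    have hlnen : l ≠ n := by omega
    set f' := Function.update f l m with hf'def
    have hf'l : f' l = m := Function.update_self _ _ _
    have hf'ne : ∀ j, j ≠ l → f' j = f j := fun j hj => Function.update_of_ne hj _ _
    have hf' : IsGeo G n f' := by
      constructor
      · intro j hj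
        by_cases hjl1 : j = l1
        · rw [hjl1, hf'ne l1 (by omega), show l1 + 1 = l from hl1.symm, hf'l]
          exact hm1
        · by_cases hjl : j = l
          · rw [hjl, hf'l, hf'ne (l+1) (by omega)]
            exact hm2
          · rw [hf'ne j hjl, hf'ne (j+1) (by omega)]
            exact hf.1 j hj
      · rw [hf'ne 0 (by omega), hf'ne n (by omega)]
        exact hf.2
    have hupd : (fun i => G.dist a (f' i)) = Function.update (fun i => G.dist a (f i)) l (G.dist a m) := by
      funext j
      by_cases hj : j = l
      · rw [hj, hf'l, Function.update_self]
      · rw [hf'ne j hj, Function.update_of_ne hj]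
    have hmem : l ∈ Finset.range (n+1) := Finset.mem_range.mpr (by omega)
    have hsum : (∑ i ∈ Finset.range (n+1), G.dist a (f' i)) + 2 = S := by
      have h1 : (∑ i ∈ Finset.range (n+1), G.dist a (f' i))
          = G.dist a m + ∑ i ∈ (Finset.range (n+1)).erase l, G.dist a (f i) := by
        rw [hupd, Finset.sum_update_of_mem hmem, Finset.sdiff_singleton_eq_erase]
      have h2 := Finset.add_sum_erase (Finset.range (n+1)) (fun i => G.dist a (f i)) hmem
      rw [hS] at h2
      omega
    by_cases hmH : m ∈ Hs G a b
    · rcases Nat.eq_or_lt_of_le hli0 with he | hlt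
      · -- i0 = l : tail segment from l
        have hfl1out : f (l+1) ∉ Hs G a b := hout (l+1) (by omega) (by omega)
        have hg : IsGeo G (n - l) (fun t => f' (l + t)) := by
          constructor
          · intro t ht
            have e : l + (t + 1) = (l + t) + 1 := by omega
            simp only []
            rw [e]
            exact hf'.1 (l + t) (by omega)
          · have h := geo_dist hconn hf' (show l ≤ n by omega) (le_refl n)
            simp only [Nat.add_zero]
            rw [show l + (n - l) = n by omega]
            omega
        have hres := IHn (n - l) (by omega) _ (fun t => f' (l + t)) hg rfl
          (by simp only [Nat.add_zero]; rw [hf'l]; exact hmH)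
          (by rw [show l + (n - l) = n by omega, hf'ne n (by omega)]; exact hn)
          1 (by omega)
        rw [hf'ne (l+1) (by omega)] at hres
        exact hfl1out hres
      · -- i0 < l : head segment
        have hg : IsGeo G l f' := by
          constructor
          · intro t ht
            exact hf'.1 t (by omega)
          · have h := geo_dist hconn hf' (Nat.zero_le l) (show l ≤ n by omega)
            omega
        have hres := IHn l (by omega) _ f' hg rfl
          (by rw [hf'ne 0 (by omega)]; exact h0)
          (by rw [hf'l]; exact hmH)
          i0 (by omega)
        rw [hf'ne i0 (by omega)] at hres
        exact hi0bad hres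
    · have hres := IHS _ (by omega) f' hf' rfl
        (by rw [hf'ne 0 (by omega)]; exact h0)
        (by rw [hf'ne n (by omega)]; exact hn)
        l (by omega)
      rw [hf'l] at hres
      exact hmH hres


/-- halfspaces are convex -/
lemma conv (hG : IsMedianGraph G) {a b u v z : V} (hab : G.Adj a b)
    (hu : u ∈ Hs G a b) (hv : v ∈ Hs G a b) (hz : Btw G u z v) : z ∈ Hs G a b := by
  obtain ⟨f, hf, h0, hn, hzz⟩ := exists_geo_thru hG.1 hz
  have hle : G.dist u z ≤ G.dist u v := by
    unfold Btw at hz; omega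
  have h := geo_side hG hab (G.dist u v) _ f hf rfl (by rw [h0]; exact hu)
    (by rw [hn]; exact hv) (G.dist u z) hle
  rwa [hzz] at h

lemma m1 (hG : IsMedianGraph G) {a b u u' z : V} (hab : G.Adj a b)
    (huu' : G.Adj u u') (hu : u ∈ Hs G a b) (hu' : u' ∈ Hs G b a)
    (hz : z ∈ Hs G a b) : G.dist z u' = G.dist z u + 1 := by
  obtain ⟨m, c1, c2, c3⟩ := med hG z u u'
  unfold Btw at c1 c2 c3
  rw [adj_dist_one huu'] at c3
  have hcase : G.dist u m = 0 ∨ G.dist m u' = 0 := by omega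
  rcases hcase with h | h
  · have hm : m = u := eq_of_dist_zero' hG.1 h
    rw [hm] at c2
    rw [adj_dist_one huu'] at c2
    omega
  · have hm : m = u' := eq_of_dist_zero hG.1 h
    rw [hm] at c1
    have : u' ∈ Hs G a b := conv hG hab hz hu c1
    exact absurd this (fun hh => not_both hh hu')

/-- the key one-sided carrier lemma -/
lemma sideL (hG : IsMedianGraph G) {a b z u u' r : V} (hab : G.Adj a b)
    (hz : z ∈ Hs G a b) (hu : u ∈ Hs G a b) (huu' : G.Adj u u') (hu' : u' ∈ Hs G b a)
    (hr : r ∈ Hs G b a) (hbtw : Btw G u z r) : ∃ w, G.Adj z w ∧ w ∈ Hs G b a := by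
  have e1 : G.dist z u' = G.dist z u + 1 := m1 hG hab huu' hu hu' hz
  have e2 : G.dist r u = G.dist r u' + 1 := m1 hG hab.symm huu'.symm hu' hu hr
  obtain ⟨m, c1, c2, c3⟩ := med hG z u' r
  unfold Btw at c1 c2 c3
  have hm : m ∈ Hs G b a := conv hG hab.symm hu' hr c3
  unfold Btw at hbtw
  have q1 : G.dist u z = G.dist z u := SimpleGraph.dist_comm
  have q2 : G.dist u' r = G.dist r u' := SimpleGraph.dist_comm
  have q3 : G.dist u r = G.dist r u := SimpleGraph.dist_comm
  have q4 : G.dist u' m = G.dist m u' := SimpleGraph.dist_comm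
  have hzm : G.dist z m = 1 := by omega
  exact ⟨m, dist_one_adj hzm, hm⟩

/-- opposite sides -/
def Opp (G : SimpleGraph V) (a b x w : V) : Prop :=
  (x ∈ Hs G a b ∧ w ∈ Hs G b a) ∨ (x ∈ Hs G b a ∧ w ∈ Hs G a b)

lemma opp_symm {a b x w : V} (h : Opp G a b x w) : Opp G a b w x := by
  rcases h with ⟨h1, h2⟩ | ⟨h1, h2⟩
  · exact Or.inr ⟨h2, h1⟩
  · exact Or.inl ⟨h2, h1⟩

lemma opp_swap {a b x w : V} (h : Opp G a b x w) : Opp G b a x w := by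
  rcases h with h | h
  · exact Or.inr h
  · exact Or.inl h

lemma theta_iff (hG : IsMedianGraph G) {a b x y : V} (hab : G.Adj a b) (hxy : G.Adj x y) :
    Theta G (a, b) (x, y) ↔ Opp G a b x y := by
  have hx := mem_or hG hab x
  have hy := mem_or hG hab y
  have c1 : G.dist a x = G.dist x a := SimpleGraph.dist_comm
  have c2 : G.dist a y = G.dist y a := SimpleGraph.dist_comm
  have c3 : G.dist b x = G.dist x b := SimpleGraph.dist_comm
  have c4 : G.dist b y = G.dist y b := SimpleGraph.dist_comm
  unfold Theta Opp
  simp only [mem_Hs] at *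
  omega

/-- carrier of the hyperplane dual to the edge (a, b) -/
def Car (G : SimpleGraph V) (a b : V) : Set V :=
  {x | ∃ w, G.Adj x w ∧ Opp G a b x w}

lemma car_swap {a b x : V} (h : x ∈ Car G a b) : x ∈ Car G b a := by
  obtain ⟨w, h1, h2⟩ := h
  exact ⟨w, h1, opp_swap h2⟩

lemma car_cross (hG : IsMedianGraph G) {a b x : V} (hc : x ∈ Car G a b)
    (hx : x ∈ Hs G a b) : ∃ w, G.Adj x w ∧ w ∈ Hs G b a := by
  obtain ⟨w, h1, h2⟩ := hc
  rcases h2 with ⟨_, h3⟩ | ⟨h3, _⟩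
  · exact ⟨w, h1, h3⟩
  · exact absurd hx (fun hh => not_both hh h3)

lemma car_conv_half (hG : IsMedianGraph G) {a b v1 v2 z : V} (hab : G.Adj a b)
    (hz : z ∈ Hs G a b) (h1 : v1 ∈ Car G a b) (h2 : v2 ∈ Car G a b)
    (hbtw : Btw G v1 z v2) : ∃ w, G.Adj z w ∧ w ∈ Hs G b a := by
  rcases mem_or hG hab v1 with hv1 | hv1
  · rcases mem_or hG hab v2 with hv2 | hv2
    · -- both on the a side
      obtain ⟨v2', ha2, hv2'⟩ := car_cross hG h2 hv2
      obtain ⟨v1', ha1, hv1'⟩ := car_cross hG h1 hv1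
      have e1 : G.dist z v2' = G.dist z v2 + 1 := m1 hG hab ha2 hv2 hv2' hz
      have e2 : G.dist v1 v2' = G.dist v1 v2 + 1 := m1 hG hab ha2 hv2 hv2' hv1
      have hbtw' : Btw G v1 z v2' := by
        unfold Btw at *; omega
      exact sideL hG hab hz hv1 ha1 hv1' hv2' hbtw'
    · obtain ⟨v1', ha1, hv1'⟩ := car_cross hG h1 hv1
      exact sideL hG hab hz hv1 ha1 hv1' hv2 hbtw
  · rcases mem_or hG hab v2 with hv2 | hv2
    · obtain ⟨v2', ha2, hv2'⟩ := car_cross hG h2 hv2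
      have hbtw' : Btw G v2 z v1 := by
        unfold Btw at *
        have q1 : G.dist v1 z = G.dist z v1 := SimpleGraph.dist_comm
        have q2 : G.dist z v2 = G.dist v2 z := SimpleGraph.dist_comm
        have q3 : G.dist v1 v2 = G.dist v2 v1 := SimpleGraph.dist_comm
        omega
      exact sideL hG hab hz hv2 ha2 hv2' hv1 hbtw'
    · have : z ∈ Hs G b a := conv hG hab.symm hv1 hv2 hbtw
      exact absurd hz (fun hh => not_both hh this)

/-- carriers are convex -/
lemma car_conv (hG : IsMedianGraph G) {a b v1 v2 z : V} (hab : G.Adj a b)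
    (h1 : v1 ∈ Car G a b) (h2 : v2 ∈ Car G a b) (hbtw : Btw G v1 z v2) :
    z ∈ Car G a b := by
  rcases mem_or hG hab z with hz | hz
  · obtain ⟨w, hw1, hw2⟩ := car_conv_half hG hab hz h1 h2 hbtw
    exact ⟨w, hw1, Or.inl ⟨hz, hw2⟩⟩
  · obtain ⟨w, hw1, hw2⟩ := car_conv_half hG hab.symm hz (car_swap h1) (car_swap h2) hbtw
    exact ⟨w, hw1, Or.inr ⟨hz, hw2⟩⟩

lemma adjTo_iff (hG : IsMedianGraph G) {a b : V} (hab : G.Adj a b) (v : V) :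
    AdjTo G {f | G.Adj f.1 f.2 ∧ Theta G (a, b) f} v ↔ v ∈ Car G a b := by
  constructor
  · rintro ⟨⟨x, y⟩, ⟨hadj, hth⟩, hv | hv⟩
    · rw [← hv]
      exact ⟨y, hadj, (theta_iff hG hab hadj).mp hth⟩
    · rw [← hv]
      exact ⟨x, hadj.symm, opp_symm ((theta_iff hG hab hadj).mp hth)⟩
  · rintro ⟨w, hadj, hopp⟩
    exact ⟨(v, w), ⟨hadj, (theta_iff hG hab hadj).mpr hopp⟩, Or.inl rfl⟩

lemma car_self (hG : IsMedianGraph G) {a b : V} (hab : G.Adj a b) : a ∈ Car G a b := by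
  refine ⟨b, hab, Or.inl ⟨?_, ?_⟩⟩
  · rw [mem_Hs, SimpleGraph.dist_self, adj_dist_one hab]
  · rw [mem_Hs, SimpleGraph.dist_self]
    rw [SimpleGraph.dist_comm]
    rw [adj_dist_one hab]


/-- Helly property for convex subsets of a median graph -/
lemma helly (hG : IsMedianGraph G) :
    ∀ (n : ℕ) (s : Finset (Set V)), s.card = n →
      (∀ A ∈ s, (∀ x ∈ A, ∀ y ∈ A, ∀ m, Btw G x m y → m ∈ A) ∧ A.Nonempty) →
      (∀ A ∈ s, ∀ B ∈ s, (A ∩ B).Nonempty) →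
      ∃ v : V, ∀ A ∈ s, v ∈ A := by
  classical
  intro n
  induction n using Nat.strong_induction_on with
  | _ n IH =>
  intro s hcard hcvx hpair
  rcases Nat.lt_or_ge n 2 with h2 | h2
  · rcases Nat.lt_or_ge n 1 with h1 | h1
    · -- n = 0
      have hs : s = ∅ := Finset.card_eq_zero.mp (by omega)
      obtain ⟨v⟩ := hG.1.nonempty
      exact ⟨v, by rw [hs]; intro A hA; exact absurd hA (Finset.notMem_empty A)⟩
    · -- n = 1
      have hs : s.card = 1 := by omega
      obtain ⟨A, hA⟩ := Finset.card_eq_one.mp hs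
      obtain ⟨v, hv⟩ := (hcvx A (by rw [hA]; exact Finset.mem_singleton_self A)).2
      refine ⟨v, fun B hB => ?_⟩
      rw [hA, Finset.mem_singleton] at hB
      rw [hB]; exact hv
  · obtain ⟨A, hAs, B, hBs, hAB⟩ := Finset.one_lt_card.mp (show 1 < s.card by omega)
    set t := insert (A ∩ B) ((s.erase A).erase B) with htdef
    have hBe : B ∈ s.erase A := Finset.mem_erase.mpr ⟨fun h => hAB h.symm, hBs⟩
    have hee : ((s.erase A).erase B).card = n - 2 := by
      rw [Finset.card_erase_of_mem hBe, Finset.card_erase_of_mem hAs, hcard]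
      omega
    have htcard : t.card < n := by
      have hle := Finset.card_insert_le (A ∩ B) ((s.erase A).erase B)
      rw [← htdef] at hle
      omega
    have hsub : ∀ X ∈ (s.erase A).erase B, X ∈ s := by
      intro X hX
      exact Finset.mem_of_mem_erase (Finset.mem_of_mem_erase hX)
    have hABcvx : (∀ x ∈ A ∩ B, ∀ y ∈ A ∩ B, ∀ m, Btw G x m y → m ∈ A ∩ B) := by
      intro x hx y hy m hm
      exact ⟨(hcvx A hAs).1 x hx.1 y hy.1 m hm, (hcvx B hBs).1 x hx.2 y hy.2 m hm⟩
    have h3 : ∀ C ∈ s, ((A ∩ B) ∩ C).Nonempty := by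
      intro C hCs
      obtain ⟨x, hx⟩ := hpair A hAs B hBs
      obtain ⟨y, hy⟩ := hpair A hAs C hCs
      obtain ⟨z, hz⟩ := hpair B hBs C hCs
      obtain ⟨m, hm1, hm2, hm3⟩ := med hG x y z
      refine ⟨m, ⟨⟨?_, ?_⟩, ?_⟩⟩
      · exact (hcvx A hAs).1 x hx.1 y hy.1 m hm1
      · exact (hcvx B hBs).1 x hx.2 z hz.1 m hm2
      · exact (hcvx C hCs).1 y hy.2 z hz.2 m hm3
    have hcvx' : ∀ X ∈ t, (∀ x ∈ X, ∀ y ∈ X, ∀ m, Btw G x m y → m ∈ X) ∧ X.Nonempty := by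
      intro X hX
      rcases Finset.mem_insert.mp hX with h | h
      · rw [h]
        exact ⟨hABcvx, hpair A hAs B hBs⟩
      · exact hcvx X (hsub X h)
    have hpair' : ∀ X ∈ t, ∀ Y ∈ t, (X ∩ Y).Nonempty := by
      intro X hX Y hY
      rcases Finset.mem_insert.mp hX with h | h <;> rcases Finset.mem_insert.mp hY with h' | h'
      · rw [h, h']
        obtain ⟨x, hx⟩ := hpair A hAs B hBs
        exact ⟨x, hx, hx⟩
      · rw [h]
        exact h3 Y (hsub Y h')
      · rw [h']
        obtain ⟨x, hx1, hx2⟩ := h3 X (hsub X h)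
        exact ⟨x, hx2, hx1⟩
      · exact hpair X (hsub X h) Y (hsub Y h')
    obtain ⟨v, hv⟩ := IH t.card htcard t rfl hcvx' hpair'
    have hvAB : v ∈ A ∩ B := hv (A ∩ B) (Finset.mem_insert_self _ _)
    refine ⟨v, fun X hX => ?_⟩
    by_cases hXA : X = A
    · rw [hXA]; exact hvAB.1
    by_cases hXB : X = B
    · rw [hXB]; exact hvAB.2
    exact hv X (Finset.mem_insert_of_mem (Finset.mem_erase.mpr ⟨hXB, Finset.mem_erase.mpr ⟨hXA, hX⟩⟩))

end MGAux

/-- every maximal finite clique of the contact graph is of the form `Wv G v`. -/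
theorem max_finite_clique_eq_Wv (G : SimpleGraph V) (hG : IsMedianGraph G)
    (C : Set (Set (V × V))) (hfin : C.Finite) (hC : IsMaxContactClique G C) :
    ∃ v : V, C = Wv G v := by
  classical
  obtain ⟨hcq, hmax⟩ := hC
  have hconn := hG.1
  set F : Finset (Set V) := hfin.toFinset.image (fun h => {v | AdjTo G h v}) with hFdef
  have hrep : ∀ A ∈ F, ∃ h ∈ C, {v | AdjTo G h v} = A := by
    intro A hA
    obtain ⟨h, hh, he⟩ := Finset.mem_image.mp hA
    exact ⟨h, hfin.mem_toFinset.mp hh, he⟩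
  have hcarr : ∀ h ∈ C, ∃ a b : V, G.Adj a b ∧ {v | AdjTo G h v} = MGAux.Car G a b := by
    intro h hh
    obtain ⟨⟨a, b⟩, hab, rfl⟩ := hcq.1 h hh
    exact ⟨a, b, hab, Set.ext (fun v => MGAux.adjTo_iff hG hab v)⟩
  have hcvx : ∀ A ∈ F, (∀ x ∈ A, ∀ y ∈ A, ∀ m, MGAux.Btw G x m y → m ∈ A) ∧ A.Nonempty := by
    intro A hA
    obtain ⟨h, hh, he⟩ := hrep A hA
    obtain ⟨a, b, hab, hce⟩ := hcarr h hh
    rw [← he, hce]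
    constructor
    · intro x hx y hy m hm
      exact MGAux.car_conv hG hab hx hy hm
    · exact ⟨a, MGAux.car_self hG hab⟩
  have hpair : ∀ A ∈ F, ∀ B ∈ F, (A ∩ B).Nonempty := by
    intro A hA B hB
    obtain ⟨h, hh, he⟩ := hrep A hA
    obtain ⟨h', hh', he'⟩ := hrep B hB
    by_cases hne : h = h'
    · obtain ⟨x, hx⟩ := (hcvx A hA).2
      refine ⟨x, hx, ?_⟩
      rw [← he']
      rw [← hne]
      rw [← he] at hx
      · exact hx
    · obtain ⟨w, hw1, hw2⟩ := hcq.2 h hh h' hh' hne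
      refine ⟨w, ?_, ?_⟩
      · rw [← he]; exact hw1
      · rw [← he']; exact hw2
  obtain ⟨v, hv⟩ := MGAux.helly hG F.card F rfl hcvx hpair
  have hall : ∀ h ∈ C, AdjTo G h v := by
    intro h hh
    have hmem : {v | AdjTo G h v} ∈ F := by
      rw [hFdef]
      exact Finset.mem_image_of_mem _ (hfin.mem_toFinset.mpr hh)
    exact hv _ hmem
  have hsub : C ⊆ Wv G v := fun h hh => ⟨hcq.1 h hh, hall h hh⟩
  have hclq : IsContactClique G (Wv G v) :=
    ⟨fun h hh => hh.1, fun h hh h' hh' _ => ⟨v, hh.2, hh'.2⟩⟩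
  exact ⟨v, (hmax _ hclq hsub).symm⟩
end

section
/- Let X be a uniformly locally finite CAT(0) cube complex with no extremal vertices (no vertex whose link is a cone). Then the map sending a vertex v to the set W_v of hyperplanes adjacent to v is a bijection between the vertex set of X and the set of maximal cliques of the contact graph C(X). -/
open SimpleGraph

variable {V : Type*}

namespace MedianCC

variable {V : Type*} {G : SimpleGraph V} {u v w x y z a b : V}

private lemma adj_dist (h : G.Adj u v) : G.dist u v = 1 :=
  SimpleGraph.dist_eq_one_iff_adj.mpr h

private lemma adj_of_dist_one (h : G.dist u v = 1) : G.Adj u v :=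
  SimpleGraph.dist_eq_one_iff_adj.mp h

private lemma tri (hc : G.Connected) (u v w : V) :
    G.dist u w ≤ G.dist u v + G.dist v w :=
  hc.dist_triangle

private lemma dist0 (hc : G.Connected) : G.dist u v = 0 ↔ u = v :=
  hc.dist_eq_zero_iff

private lemma exists_adj_btw (hc : G.Connected) (hne : u ≠ z) :
    ∃ u1, G.Adj u u1 ∧ G.dist u1 z + 1 = G.dist u z := by
  obtain ⟨p, hp⟩ := hc.exists_walk_length_eq_dist u z
  cases p with
  | nil => exact absurd rfl hne
  | @cons _ u1 _ h q =>
    refine ⟨u1, h, ?_⟩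
    have h1 : G.dist u1 z ≤ q.length := SimpleGraph.dist_le q
    have h2 : G.dist u z ≤ G.dist u u1 + G.dist u1 z := tri hc u u1 z
    have h3 : G.dist u u1 = 1 := adj_dist h
    have h4 : q.length + 1 = G.dist u z := by
      simpa [SimpleGraph.Walk.length_cons] using hp
    omega

private lemma grade (hm : IsMedianGraph G) (hxy : G.Adj x y) (v : V) :
    G.dist v y = G.dist v x + 1 ∨ G.dist v x = G.dist v y + 1 := by
  obtain ⟨m, ⟨h1, h2, h3⟩, -⟩ := hm.2 x y v
  have hc := hm.1
  have hd : G.dist x y = 1 := adj_dist hxy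
  have h0 : G.dist x m = 0 ∨ G.dist m y = 0 := by omega
  rcases h0 with h | h
  · left
    have hmx : x = m := (dist0 hc).mp h
    rw [← hmx] at h3
    have c1 : G.dist v y = G.dist y v := SimpleGraph.dist_comm
    have c2 : G.dist v x = G.dist x v := SimpleGraph.dist_comm
    have c3 : G.dist y x = 1 := by rw [SimpleGraph.dist_comm]; exact hd
    omega
  · right
    have hmy : m = y := (dist0 hc).mp h
    rw [hmy] at h2
    have c1 : G.dist v y = G.dist y v := SimpleGraph.dist_comm
    have c2 : G.dist v x = G.dist x v := SimpleGraph.dist_comm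
    omega

private lemma side_succ (hm : IsMedianGraph G) (hxy : G.Adj x y)
    (h : G.dist u x < G.dist u y) : G.dist u y = G.dist u x + 1 := by
  rcases grade hm hxy u with h' | h' <;> omega

private lemma btw_side (hm : IsMedianGraph G) (hxy : G.Adj x y)
    (hu : G.dist u x < G.dist u y) (h : G.dist u z + G.dist z x = G.dist u x) :
    G.dist z x < G.dist z y := by
  have h1 := side_succ hm hxy hu
  have h2 := tri hm.1 u z y
  omega

private lemma exists_cross_adj (hm : IsMedianGraph G) (hxy : G.Adj x y) :
    ∀ (k : ℕ) (u z w : V), G.dist u z = k →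
      G.dist u x < G.dist u y → ¬ G.dist z x < G.dist z y →
      G.dist u z + G.dist z w = G.dist u w →
      ∃ a b : V, G.Adj a b ∧ G.dist a x < G.dist a y ∧ ¬ G.dist b x < G.dist b y ∧
        1 + G.dist b w = G.dist a w ∧ G.dist a w ≤ G.dist u w := by
  intro k
  induction k using Nat.strong_induction_on with
  | _ k IH =>
    intro u z w hk hu hz hbtw
    have hne : u ≠ z := by rintro rfl; exact hz hu
    obtain ⟨u1, hadj, hd1⟩ := exists_adj_btw hm.1 hne
    have hduu1 : G.dist u u1 = 1 := adj_dist hadj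
    have ht1 : G.dist u w ≤ G.dist u u1 + G.dist u1 w := tri hm.1 _ _ _
    have ht2 : G.dist u1 w ≤ G.dist u1 z + G.dist z w := tri hm.1 _ _ _
    by_cases h1 : G.dist u1 x < G.dist u1 y
    · have hlt : G.dist u1 z < k := by omega
      have hb : G.dist u1 z + G.dist z w = G.dist u1 w := by omega
      obtain ⟨a, b, p1, p2, p3, p4, p5⟩ := IH _ hlt u1 z w rfl h1 hz hb
      exact ⟨a, b, p1, p2, p3, p4, by omega⟩
    · exact ⟨u, u1, hadj, hu, h1, by omega, le_refl _⟩

private lemma arith_st (s t n dbw dbx dMa dMx dMy dwa : ℕ)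
    (e1 : dbw + t = dbx) (e2 : dbx = s + 1) (e3 : 1 + dbw = n)
    (e4 : dMa + s = dMx) (e5 : dMx = dMy + 1) (e6 : dMy = t)
    (e7 : 1 + dMa = dwa) (e8 : dwa = n) :
    t = s ∧ n = 2 ∧ dbw = 1 := by omega

set_option maxHeartbeats 1000000 in
private lemma square_endgame (hm : IsMedianGraph G) (hxy : G.Adj x y) {a b w : V}
    (hadj : G.Adj a b) (hax : G.dist a x < G.dist a y) (hw : G.dist w x < G.dist w y)
    (hbx : ¬ G.dist b x < G.dist b y) (hn2 : G.dist a w = 2) (hbw1 : G.dist b w = 1)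
    (hst : G.dist w x = G.dist a x) : False := by
  have hc := hm.1
  have hab1 : G.dist a b = 1 := adj_dist hadj
  have hay : G.dist a y = G.dist a x + 1 := side_succ hm hxy hax
  have hwy : G.dist w y = G.dist w x + 1 := side_succ hm hxy hw
  have hbx' : G.dist b x = G.dist b y + 1 := by
    rcases grade hm hxy b with h | h
    · omega
    · exact h
  have gbx := grade hm hadj x
  have gby := grade hm hadj y
  have cxa : G.dist x a = G.dist a x := SimpleGraph.dist_comm
  have cxb : G.dist x b = G.dist b x := SimpleGraph.dist_comm
  have cya : G.dist y a = G.dist a y := SimpleGraph.dist_comm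
  have cyb : G.dist y b = G.dist b y := SimpleGraph.dist_comm
  have hbxv : G.dist b x = G.dist a x + 1 := by omega
  have hbyv : G.dist b y = G.dist a x := by omega
  clear gbx gby cxa cxb cya cyb hbx'
  -- the median z' of (a, w, x)
  obtain ⟨z', ⟨f1, f2, f3⟩, -⟩ := hm.2 a w x
  have cz'w : G.dist w z' = G.dist z' w := SimpleGraph.dist_comm
  have hz'1 : G.dist a z' = 1 := by omega
  have hz'2 : G.dist z' w = 1 := by omega
  have hz'x : G.dist z' x + 1 = G.dist a x := by omega
  have hz'side : G.dist z' x < G.dist z' y := btw_side hm hxy hax f2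
  have hz'y : G.dist z' y = G.dist z' x + 1 := side_succ hm hxy hz'side
  clear f1 f2 f3 hz'side
  -- b and z' are at distance 2; median y' of (b, z', y)
  have hbz' : b ≠ z' := by rintro rfl; omega
  have t6 : G.dist b z' ≤ G.dist b a + G.dist a z' := tri hc _ _ _
  have cab : G.dist b a = G.dist a b := SimpleGraph.dist_comm
  have t7 : G.dist b x ≤ G.dist b z' + G.dist z' x := tri hc _ _ _
  have hbz'2 : G.dist b z' = 2 := by omega
  clear t6 t7 cab
  obtain ⟨y', ⟨g1, g2, g3⟩, -⟩ := hm.2 b z' y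
  have cy'z' : G.dist z' y' = G.dist y' z' := SimpleGraph.dist_comm
  have hby' : G.dist b y' = 1 := by omega
  have hz'y' : G.dist z' y' = 1 := by omega
  have hy'y : G.dist y' y + 1 = G.dist a x := by omega
  clear g1 g2 g3
  -- a and w are both at distance 2 from y'
  have t8 : G.dist a y' ≤ G.dist a b + G.dist b y' := tri hc _ _ _
  have t9 : G.dist a y ≤ G.dist a y' + G.dist y' y := tri hc _ _ _
  have hay' : G.dist a y' = 2 := by omega
  have cwb : G.dist w b = G.dist b w := SimpleGraph.dist_comm
  have t10 : G.dist w y' ≤ G.dist w b + G.dist b y' := tri hc _ _ _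
  have t11 : G.dist w y ≤ G.dist w y' + G.dist y' y := tri hc _ _ _
  have hwy' : G.dist w y' = 2 := by omega
  clear t8 t9 t10 t11
  -- both b and z' are medians of (a, w, y')
  obtain ⟨mf, -, hun⟩ := hm.2 a w y'
  have hb_is : b = mf := hun b ⟨by omega, by omega, by omega⟩
  have hz'_is : z' = mf := hun z' ⟨by omega, by omega, by omega⟩
  exact hbz' (hb_is.trans hz'_is.symm)

set_option maxHeartbeats 1000000 in

private lemma side_convex_aux (hm : IsMedianGraph G) (hxy : G.Adj x y) :
    ∀ (n : ℕ) (u w z : V), G.dist u w = n →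
      G.dist u x < G.dist u y → G.dist w x < G.dist w y →
      G.dist u z + G.dist z w = G.dist u w → G.dist z x < G.dist z y := by
  intro n
  induction n using Nat.strong_induction_on with
  | _ n IH =>
    intro u w z hn hu hw hbtw
    by_contra hzy
    have hc := hm.1
    obtain ⟨a, b, hadj, hax, hbx, hstep, hle⟩ :=
      exists_cross_adj hm hxy (G.dist u z) u z w rfl hu hzy hbtw
    have hab1 : G.dist a b = 1 := adj_dist hadj
    have han : G.dist a w = n := by
      rcases Nat.lt_or_ge (G.dist a w) n with hlt | hge
      · exact absurd (IH _ hlt a w b rfl hax hw (by omega)) hbx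
      · omega
    -- step2, applied twice below
    have step2 : ∀ p q r : V, G.Adj p r → G.dist p x < G.dist p y →
        G.dist q x < G.dist q y → ¬ G.dist r x < G.dist r y →
        1 + G.dist r q = G.dist p q → G.dist p q = n →
        G.dist r q + G.dist q x = G.dist r x := by
      intro p q r hpr hpx hqx hrx hstep' hpq
      obtain ⟨m, ⟨m1, m2, m3⟩, -⟩ := hm.2 r q x
      have hmx : G.dist m x < G.dist m y := btw_side hm hxy hqx m3
      by_cases hmq : m = q
      · subst hmq; exact m2
      · exfalso
        have hpos : 0 < G.dist m q := by
          have h0 : G.dist m q ≠ 0 := fun h0 => hmq ((dist0 hc).mp h0)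
          omega
        have hd1 : G.dist p r = 1 := adj_dist hpr
        have t1 : G.dist p m ≤ G.dist p r + G.dist r m := tri hc _ _ _
        have t2 : G.dist p q ≤ G.dist p m + G.dist m q := tri hc _ _ _
        have hpm : G.dist p r + G.dist r m = G.dist p m := by omega
        exact hrx (IH (G.dist p m) (by omega) p m r rfl hpx hmx hpm)
    have E1 := step2 a w b hadj hax hw hbx hstep han
    have hay : G.dist a y = G.dist a x + 1 := side_succ hm hxy hax
    have hwy : G.dist w y = G.dist w x + 1 := side_succ hm hxy hw
    have hbx' : G.dist b x = G.dist b y + 1 := by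
      rcases grade hm hxy b with h | h
      · omega
      · exact h
    have gbx := grade hm hadj x
    have gby := grade hm hadj y
    have cxa : G.dist x a = G.dist a x := SimpleGraph.dist_comm
    have cxb : G.dist x b = G.dist b x := SimpleGraph.dist_comm
    have cya : G.dist y a = G.dist a y := SimpleGraph.dist_comm
    have cyb : G.dist y b = G.dist b y := SimpleGraph.dist_comm
    have hbxv : G.dist b x = G.dist a x + 1 := by omega
    have hbyv : G.dist b y = G.dist a x := by omega
    -- step 3 : the median M of (b, w, y)
    obtain ⟨M, ⟨m1, m2, m3⟩, -⟩ := hm.2 b w y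
    have hMy' : G.dist M y < G.dist M x :=
      btw_side hm hxy.symm (by omega : G.dist b y < G.dist b x) m2
    have cMw : G.dist w M = G.dist M w := SimpleGraph.dist_comm
    have hMyv : G.dist M y = G.dist w x := by omega
    have hMw : G.dist M w = 1 := by omega
    have hMadj : G.Adj w M := adj_of_dist_one (by omega)
    have t4 : G.dist a w ≤ G.dist a M + G.dist M w := tri hc _ _ _
    have t5 : G.dist a M ≤ G.dist a b + G.dist b M := tri hc _ _ _
    have cMb : G.dist M b = G.dist b M := SimpleGraph.dist_comm
    have cMa : G.dist M a = G.dist a M := SimpleGraph.dist_comm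
    have caw : G.dist w a = G.dist a w := SimpleGraph.dist_comm
    have hMua : 1 + G.dist M a = G.dist w a := by omega
    have E2 := step2 w a M hMadj hw hax (by omega) hMua (by omega)
    have hMx : G.dist M x = G.dist M y + 1 := by
      rcases grade hm hxy M with h | h
      · omega
      · exact h
    obtain ⟨hst, hn2, hbw1⟩ :=
      arith_st (G.dist a x) (G.dist w x) n (G.dist b w) (G.dist b x) (G.dist M a)
        (G.dist M x) (G.dist M y) (G.dist w a) E1 hbxv (by omega) E2 hMx hMyv hMua (by omega)
    exact square_endgame hm hxy hadj hax hw hbx (by omega) hbw1 (by omega)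

private lemma side_convex (hm : IsMedianGraph G) (hxy : G.Adj x y)
    (hu : G.dist u x < G.dist u y) (hw : G.dist w x < G.dist w y)
    (hz : G.dist u z + G.dist z w = G.dist u w) : G.dist z x < G.dist z y :=
  side_convex_aux hm hxy (G.dist u w) u w z rfl hu hw hz

/-! ### The Djoković–Winkler relation -/

private lemma theta_pair_iff {x y a b : V} : Theta G (x, y) (a, b) ↔
    G.dist x a + G.dist y b ≠ G.dist x b + G.dist y a := Iff.rfl

private lemma theta_iff (hm : IsMedianGraph G) (hxy : G.Adj x y) (hab : G.Adj a b) :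
    Theta G (x, y) (a, b) ↔ (G.dist a x < G.dist a y ↔ ¬ G.dist b x < G.dist b y) := by
  have ga := grade hm hxy a
  have gb := grade hm hxy b
  have c1 : G.dist x a = G.dist a x := SimpleGraph.dist_comm
  have c2 : G.dist x b = G.dist b x := SimpleGraph.dist_comm
  have c3 : G.dist y a = G.dist a y := SimpleGraph.dist_comm
  have c4 : G.dist y b = G.dist b y := SimpleGraph.dist_comm
  rw [theta_pair_iff]
  omega

private lemma theta_iff' (hm : IsMedianGraph G) (hxy : G.Adj x y) (hab : G.Adj a b) :
    Theta G (x, y) (a, b) ↔ (G.dist x a < G.dist x b ↔ ¬ G.dist y a < G.dist y b) := by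
  have ga := grade hm hab x
  have gb := grade hm hab y
  rw [theta_pair_iff]
  omega

private lemma theta_symm' {x y a b : V} (h : Theta G (x, y) (a, b)) :
    Theta G (a, b) (x, y) := by
  rw [theta_pair_iff] at h ⊢
  have c1 : G.dist x a = G.dist a x := SimpleGraph.dist_comm
  have c2 : G.dist x b = G.dist b x := SimpleGraph.dist_comm
  have c3 : G.dist y a = G.dist a y := SimpleGraph.dist_comm
  have c4 : G.dist y b = G.dist b y := SimpleGraph.dist_comm
  omega

private lemma theta_flip2' {x y a b : V} : Theta G (x, y) (a, b) ↔ Theta G (x, y) (b, a) := by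
  rw [theta_pair_iff, theta_pair_iff]; omega

private lemma theta_flip1' {x y a b : V} : Theta G (x, y) (a, b) ↔ Theta G (y, x) (a, b) := by
  rw [theta_pair_iff, theta_pair_iff]; omega

private lemma theta_refl (hc : G.Connected) (hxy : G.Adj x y) : Theta G (x, y) (x, y) := by
  rw [theta_pair_iff]
  have h1 : G.dist x x = 0 := SimpleGraph.dist_self
  have h2 : G.dist y y = 0 := SimpleGraph.dist_self
  have h3 : G.dist x y = 1 := adj_dist hxy
  have h4 : G.dist y x = 1 := by rw [SimpleGraph.dist_comm]; exact h3
  omega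

private lemma theta_pair (hm : IsMedianGraph G) (hxy : G.Adj x y) (hab : G.Adj a b)
    (ht : Theta G (x, y) (a, b)) (ha : G.dist a x < G.dist a y) :
    G.dist x a < G.dist x b ∧ ¬ G.dist b x < G.dist b y := by
  have hb : ¬ G.dist b x < G.dist b y := by
    have := (theta_iff hm hxy hab).mp ht; tauto
  have gx := grade hm hab x
  have gy := grade hm hab y
  have hb' : G.dist b x = G.dist b y + 1 := by
    rcases grade hm hxy b with h | h
    · omega
    · exact h
  have ha' : G.dist a y = G.dist a x + 1 := side_succ hm hxy ha
  have c1 : G.dist x a = G.dist a x := SimpleGraph.dist_comm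
  have c2 : G.dist x b = G.dist b x := SimpleGraph.dist_comm
  have c3 : G.dist y a = G.dist a y := SimpleGraph.dist_comm
  have c4 : G.dist y b = G.dist b y := SimpleGraph.dist_comm
  exact ⟨by omega, hb⟩

private lemma side_eq (hm : IsMedianGraph G) (hxy : G.Adj x y) (hab : G.Adj a b)
    (ht : Theta G (x, y) (a, b)) (ha : G.dist a x < G.dist a y) (v : V) :
    (G.dist v x < G.dist v y) ↔ (G.dist v a < G.dist v b) := by
  obtain ⟨hx, hb⟩ := theta_pair hm hxy hab ht ha
  constructor
  · intro hv
    by_contra hvb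
    have hv' : G.dist v a = G.dist v b + 1 := by
      rcases grade hm hab v with h | h
      · omega
      · exact h
    have hba : G.dist b a = 1 := by rw [SimpleGraph.dist_comm]; exact adj_dist hab
    have hbtw : G.dist v b + G.dist b a = G.dist v a := by omega
    exact hb (side_convex hm hxy hv ha hbtw)
  · intro hv
    by_contra hvx
    have hv' : G.dist v x = G.dist v y + 1 := by
      rcases grade hm hxy v with h | h
      · omega
      · exact h
    have h1 : G.dist v b = G.dist v a + 1 := by
      rcases grade hm hab v with h | h
      · exact h
      · omega
    have hbtw : G.dist v a + G.dist a b = G.dist v b := by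
      have := adj_dist hab; omega
    have hbside : G.dist b y < G.dist b x := by
      rcases grade hm hxy b with h | h
      · omega
      · omega
    have := side_convex hm hxy.symm (show G.dist v y < G.dist v x by omega) hbside hbtw
    omega

private lemma theta_trans (hm : IsMedianGraph G) (hxy : G.Adj x y) (hab : G.Adj a b)
    {c d : V} (hcd : G.Adj c d)
    (h1 : Theta G (x, y) (a, b)) (h2 : Theta G (a, b) (c, d)) : Theta G (x, y) (c, d) := by
  rcases grade hm hxy a with ha | ha
  · have ha' : G.dist a x < G.dist a y := by omega
    have hse := side_eq hm hxy hab h1 ha'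
    have hc' := (theta_iff hm hab hcd).mp h2
    refine (theta_iff hm hxy hcd).mpr ?_
    rw [hse c, hse d]
    exact hc'
  · have hb' : G.dist b x < G.dist b y := by
      have hiff := (theta_iff hm hxy hab).mp h1
      rcases grade hm hxy b with h | h <;> omega
    have h1' : Theta G (x, y) (b, a) := theta_flip2'.mp h1
    have h2' : Theta G (b, a) (c, d) := theta_flip1'.mp h2
    have hse := side_eq hm hxy hab.symm h1' hb'
    have hc' := (theta_iff hm hab.symm hcd).mp h2'
    refine (theta_iff hm hxy hcd).mpr ?_
    rw [hse c, hse d]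
    exact hc'

/-! ### Hyperplanes -/

private def hypcl (G : SimpleGraph V) (e : V × V) : Set (V × V) :=
  {f | G.Adj f.1 f.2 ∧ Theta G e f}

private lemma isHyperplane_hypcl (hxy : G.Adj x y) : IsHyperplane G (hypcl G (x, y)) :=
  ⟨(x, y), hxy, rfl⟩

private lemma mem_hypcl {p q : V} {e : V × V} :
    (p, q) ∈ hypcl G e ↔ G.Adj p q ∧ Theta G e (p, q) := Iff.rfl

private lemma hypcl_eq (hm : IsMedianGraph G) (hxy : G.Adj x y) (hab : G.Adj a b)
    (ht : Theta G (x, y) (a, b)) : hypcl G (x, y) = hypcl G (a, b) := by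
  ext ⟨p, q⟩
  simp only [mem_hypcl]
  constructor
  · rintro ⟨hpq, h⟩
    exact ⟨hpq, theta_trans hm hab hxy hpq (theta_symm' ht) h⟩
  · rintro ⟨hpq, h⟩
    exact ⟨hpq, theta_trans hm hxy hab hpq ht h⟩

private lemma hyp_eq_of_mem (hm : IsMedianGraph G) {h h' : Set (V × V)}
    (hh : IsHyperplane G h) (hh' : IsHyperplane G h') {f : V × V}
    (hf : f ∈ h) (hf' : f ∈ h') : h = h' := by
  obtain ⟨⟨x', y'⟩, hxy', rfl⟩ := hh
  obtain ⟨⟨a', b'⟩, hab', rfl⟩ := hh'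
  obtain ⟨p, q⟩ := f
  obtain ⟨hpq, h1⟩ := hf
  obtain ⟨-, h2⟩ := hf'
  exact hypcl_eq hm hxy' hab' (theta_trans hm hxy' hpq hab' h1 (theta_symm' h2))

private lemma self_mem_hypcl (hc : G.Connected) (hxy : G.Adj x y) :
    (x, y) ∈ hypcl G (x, y) :=
  ⟨hxy, theta_refl hc hxy⟩

private lemma theta_flip_snd {e : V × V} {p q : V} :
    Theta G e (p, q) ↔ Theta G e (q, p) := by
  unfold Theta; dsimp only; omega

private lemma hypcl_flip {e : V × V} {p q : V} (h : (p, q) ∈ hypcl G e) :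
    (q, p) ∈ hypcl G e :=
  ⟨h.1.symm, theta_flip_snd.mp h.2⟩

private lemma hypcl_swap (x y : V) : hypcl G (x, y) = hypcl G (y, x) := by
  ext ⟨p, q⟩
  simp only [mem_hypcl]
  have h : Theta G (x, y) (p, q) ↔ Theta G (y, x) (p, q) := theta_flip1'
  tauto

private lemma adjTo_hypcl_iff {e : V × V} {v : V} :
    AdjTo G (hypcl G e) v ↔ ∃ u, (v, u) ∈ hypcl G e := by
  constructor
  · rintro ⟨⟨p, q⟩, hmem, hpq | hpq⟩
    · obtain rfl : p = v := hpq
      exact ⟨q, hmem⟩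
    · obtain rfl : q = v := hpq
      exact ⟨p, hypcl_flip hmem⟩
  · rintro ⟨u, hu⟩
    exact ⟨(v, u), hu, Or.inl rfl⟩

private lemma mem_side (hm : IsMedianGraph G) (hxy : G.Adj x y) {p q : V}
    (hpq : (p, q) ∈ hypcl G (x, y)) :
    (G.dist p x < G.dist p y ↔ ¬ G.dist q x < G.dist q y) :=
  (theta_iff hm hxy hpq.1).mp hpq.2

private lemma dist_cross (hm : IsMedianGraph G) (hxy : G.Adj x y) {p q v : V}
    (hpq : (p, q) ∈ hypcl G (x, y)) (hp : G.dist p x < G.dist p y)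
    (hv : G.dist v x < G.dist v y) : G.dist v q = G.dist v p + 1 := by
  have hadj : G.Adj p q := hpq.1
  have hq : ¬ G.dist q x < G.dist q y := by
    have := mem_side hm hxy hpq; tauto
  rcases grade hm hadj v with h | h
  · exact h
  · exfalso
    have hadj1 : G.dist q p = 1 := by rw [SimpleGraph.dist_comm]; exact adj_dist hadj
    exact hq (side_convex hm hxy hv hp (by omega : G.dist v q + G.dist q p = G.dist v p))

/-! ### Carriers of hyperplanes -/

private def carrier (G : SimpleGraph V) (e : V × V) : Set V :=
  {v | ∃ u, (v, u) ∈ hypcl G e}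

private lemma carrier_eq_adjTo (e : V × V) :
    {v | AdjTo G (hypcl G e) v} = carrier G e := by
  ext v; exact adjTo_hypcl_iff

set_option maxHeartbeats 1000000 in
private lemma cstep (hm : IsMedianGraph G) (hxy : G.Adj x y) {u w z : V}
    (hu : u ∈ carrier G (x, y)) (hw : w ∈ carrier G (x, y))
    (hux : G.dist u x < G.dist u y) (hwx : G.dist w x < G.dist w y)
    (hzx : G.dist z x < G.dist z y) (hadj : G.Adj u z)
    (hbtw : G.dist u z + G.dist z w = G.dist u w) : z ∈ carrier G (x, y) := by
  have hc := hm.1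
  obtain ⟨u', hu'⟩ := hu
  obtain ⟨w', hw'⟩ := hw
  have hu'y : ¬ G.dist u' x < G.dist u' y := by have := mem_side hm hxy hu'; tauto
  have hw'y : ¬ G.dist w' x < G.dist w' y := by have := mem_side hm hxy hw'; tauto
  obtain ⟨m, ⟨e1, e2, e3⟩, -⟩ := hm.2 z u' w'
  have hzu' : G.dist z u' = G.dist z u + 1 := dist_cross hm hxy hu' hux hzx
  have hzw' : G.dist z w' = G.dist z w + 1 := dist_cross hm hxy hw' hwx hzx
  have huw' : G.dist u w' = G.dist u w + 1 := dist_cross hm hxy hw' hwx hux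
  have hmy : ¬ G.dist m x < G.dist m y := by
    have h1 : G.dist u' y < G.dist u' x := by
      rcases grade hm hxy u' with h | h <;> omega
    have h2 : G.dist w' y < G.dist w' x := by
      rcases grade hm hxy w' with h | h <;> omega
    have := side_convex hm hxy.symm h1 h2 e3
    omega
  have hadj1 : G.dist u z = 1 := adj_dist hadj
  have c0 : G.dist z u = G.dist u z := SimpleGraph.dist_comm
  have hne0 : z ≠ m := by rintro rfl; exact hmy hzx
  have hzm0 : G.dist z m ≠ 0 := fun h0 => hne0 ((dist0 hc).mp h0)
  have hzm : G.dist z m = 1 := by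
    rcases Nat.lt_or_ge (G.dist z m) 2 with h | h
    · omega
    · exfalso
      have hmu' : m = u' := (dist0 hc).mp (by omega)
      rw [hmu'] at e2
      have t1 : G.dist u w' ≤ G.dist u u' + G.dist u' w' := tri hc _ _ _
      have hu'd : G.dist u u' = 1 := adj_dist hu'.1
      omega
  have hadjzm : G.Adj z m := adj_of_dist_one hzm
  exact ⟨m, hadjzm, (theta_iff hm hxy hadjzm).mpr (by tauto)⟩

private lemma conv_same (hm : IsMedianGraph G) (hxy : G.Adj x y) :
    ∀ (k : ℕ) (u w z : V), G.dist u z = k →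
      u ∈ carrier G (x, y) → w ∈ carrier G (x, y) →
      G.dist u x < G.dist u y → G.dist w x < G.dist w y →
      G.dist u z + G.dist z w = G.dist u w → z ∈ carrier G (x, y) := by
  intro k
  induction k using Nat.strong_induction_on with
  | _ k IH =>
    intro u w z hk hu hw hux hwx hbtw
    rcases Nat.eq_zero_or_pos k with h0 | hpos
    · exact ((dist0 hm.1).mp (by omega) : u = z) ▸ hu
    · have hne : u ≠ z := by
        rintro rfl
        have : G.dist u u = 0 := SimpleGraph.dist_self
        omega
      obtain ⟨u1, hadj, hd1⟩ := exists_adj_btw hm.1 hne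
      have h1 : G.dist u u1 = 1 := adj_dist hadj
      have t1 : G.dist u w ≤ G.dist u u1 + G.dist u1 w := tri hm.1 _ _ _
      have t2 : G.dist u1 w ≤ G.dist u1 z + G.dist z w := tri hm.1 _ _ _
      have hu1w : G.dist u1 z + G.dist z w = G.dist u1 w := by omega
      have hbtw1 : G.dist u u1 + G.dist u1 w = G.dist u w := by omega
      have hu1x : G.dist u1 x < G.dist u1 y := side_convex hm hxy hux hwx hbtw1
      have hu1 : u1 ∈ carrier G (x, y) := cstep hm hxy hu hw hux hwx hu1x hadj hbtw1
      exact IH (G.dist u1 z) (by omega) u1 w z rfl hu1 hw hu1x hwx hu1w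

private lemma carrier_conv_aux (hm : IsMedianGraph G) (hxy : G.Adj x y) {u w z : V}
    (hu : u ∈ carrier G (x, y)) (hw : w ∈ carrier G (x, y))
    (hzx : G.dist z x < G.dist z y) (hux : G.dist u x < G.dist u y)
    (hbtw : G.dist u z + G.dist z w = G.dist u w) : z ∈ carrier G (x, y) := by
  by_cases hwx : G.dist w x < G.dist w y
  · exact conv_same hm hxy _ u w z rfl hu hw hux hwx hbtw
  · obtain ⟨q, hq⟩ := hw
    have hqx : G.dist q x < G.dist q y := by have := mem_side hm hxy hq; tauto
    have hq' : (q, w) ∈ hypcl G (x, y) := hypcl_flip hq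
    have hqc : q ∈ carrier G (x, y) := ⟨w, hq'⟩
    have h1 : G.dist z w = G.dist z q + 1 := dist_cross hm hxy hq' hqx hzx
    have h2 : G.dist u w = G.dist u q + 1 := dist_cross hm hxy hq' hqx hux
    exact conv_same hm hxy _ u q z rfl hu hqc hux hqx (by omega)

private lemma carrier_swap (x y : V) : carrier G (x, y) = carrier G (y, x) := by
  unfold carrier; rw [hypcl_swap]

set_option maxHeartbeats 1000000 in
private lemma carrier_conv (hm : IsMedianGraph G) (hxy : G.Adj x y) {u w z : V}
    (hu : u ∈ carrier G (x, y)) (hw : w ∈ carrier G (x, y))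
    (hbtw : G.dist u z + G.dist z w = G.dist u w) : z ∈ carrier G (x, y) := by
  have hcomm : G.dist w z + G.dist z u = G.dist w u := by
    have c1 : G.dist w z = G.dist z w := SimpleGraph.dist_comm
    have c2 : G.dist z u = G.dist u z := SimpleGraph.dist_comm
    have c3 : G.dist w u = G.dist u w := SimpleGraph.dist_comm
    omega
  by_cases hzx : G.dist z x < G.dist z y
  · by_cases hux : G.dist u x < G.dist u y
    · exact carrier_conv_aux hm hxy hu hw hzx hux hbtw
    · by_cases hwx : G.dist w x < G.dist w y
      · exact carrier_conv_aux hm hxy hw hu hzx hwx hcomm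
      · exfalso
        have h1 : G.dist u y < G.dist u x := by
          rcases grade hm hxy u with h | h <;> omega
        have h2 : G.dist w y < G.dist w x := by
          rcases grade hm hxy w with h | h <;> omega
        have := side_convex hm hxy.symm h1 h2 hbtw
        omega
  · rw [carrier_swap] at hu hw ⊢
    have hzy : G.dist z y < G.dist z x := by
      rcases grade hm hxy z with h | h <;> omega
    by_cases huy : G.dist u y < G.dist u x
    · exact carrier_conv_aux hm hxy.symm hu hw hzy huy hbtw
    · by_cases hwy : G.dist w y < G.dist w x
      · exact carrier_conv_aux hm hxy.symm hw hu hzy hwy hcomm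
      · exfalso
        have h1 : G.dist u x < G.dist u y := by
          rcases grade hm hxy u with h | h <;> omega
        have h2 : G.dist w x < G.dist w y := by
          rcases grade hm hxy w with h | h <;> omega
        have := side_convex hm hxy h1 h2 hbtw
        omega

/-! ### Transversality from carriers -/

set_option maxHeartbeats 1000000 in
private lemma transverse_aux (hm : IsMedianGraph G) (hxy : G.Adj x y) (hab : G.Adj a b)
    (hne : hypcl G (x, y) ≠ hypcl G (a, b)) {v v1 : V}
    (hvv1 : (v, v1) ∈ hypcl G (x, y))
    (hv : v ∈ carrier G (a, b)) (hv1 : v1 ∈ carrier G (a, b))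
    (hva : G.dist v a < G.dist v b) :
    Transverse G (hypcl G (x, y)) (hypcl G (a, b)) := by
  have hc := hm.1
  have hadjv : G.Adj v v1 := hvv1.1
  have hvv1' : (v, v1) ∉ hypcl G (a, b) := fun hmem =>
    hne (hyp_eq_of_mem hm (isHyperplane_hypcl hxy) (isHyperplane_hypcl hab) hvv1 hmem)
  have hv1a : G.dist v1 a < G.dist v1 b := by
    have h2 : ¬ (G.dist v a < G.dist v b ↔ ¬ G.dist v1 a < G.dist v1 b) :=
      fun hiff => hvv1' ⟨hadjv, (theta_iff hm hab hadjv).mpr hiff⟩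
    tauto
  obtain ⟨u, hu⟩ := hv
  obtain ⟨u1, hu1⟩ := hv1
  have hub : ¬ G.dist u a < G.dist u b := by have := mem_side hm hab hu; tauto
  have hu1b : ¬ G.dist u1 a < G.dist u1 b := by have := mem_side hm hab hu1; tauto
  have hadju : G.Adj v u := hu.1
  have hadju1 : G.Adj v1 u1 := hu1.1
  have hd_vu1 : G.dist v u1 = G.dist v v1 + 1 := dist_cross hm hab hu1 hv1a hva
  have hd1 : G.dist v v1 = 1 := adj_dist hadjv
  have hg := grade hm hadju u1
  have c1 : G.dist u1 v = G.dist v u1 := SimpleGraph.dist_comm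
  have c2 : G.dist u1 u = G.dist u u1 := SimpleGraph.dist_comm
  have huu1 : G.dist u u1 = 1 := by
    rcases hg with h | h
    · exfalso
      have hub' : G.dist u b < G.dist u a := by
        rcases grade hm hab u with h' | h' <;> omega
      have hu1b' : G.dist u1 b < G.dist u1 a := by
        rcases grade hm hab u1 with h' | h' <;> omega
      have c3 : G.dist u v = G.dist v u := SimpleGraph.dist_comm
      have hd2 : G.dist v u = 1 := adj_dist hadju
      have hbtw : G.dist u v + G.dist v u1 = G.dist u u1 := by omega
      have := side_convex hm hab.symm hub' hu1b' hbtw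
      omega
    · omega
  have hadjuu1 : G.Adj u u1 := adj_of_dist_one huu1
  have hvu_nxy : (v, u) ∉ hypcl G (x, y) := fun hmem =>
    hne (hyp_eq_of_mem hm (isHyperplane_hypcl hxy) (isHyperplane_hypcl hab) hmem hu)
  have hv1u1_nxy : (v1, u1) ∉ hypcl G (x, y) := fun hmem =>
    hne (hyp_eq_of_mem hm (isHyperplane_hypcl hxy) (isHyperplane_hypcl hab) hmem hu1)
  have i1 : (G.dist v x < G.dist v y ↔ ¬ G.dist v1 x < G.dist v1 y) :=
    (theta_iff hm hxy hadjv).mp hvv1.2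
  have i2 : ¬ (G.dist v x < G.dist v y ↔ ¬ G.dist u x < G.dist u y) :=
    fun hiff => hvu_nxy ⟨hadju, (theta_iff hm hxy hadju).mpr hiff⟩
  have i3 : ¬ (G.dist v1 x < G.dist v1 y ↔ ¬ G.dist u1 x < G.dist u1 y) :=
    fun hiff => hv1u1_nxy ⟨hadju1, (theta_iff hm hxy hadju1).mpr hiff⟩
  have iu : (G.dist u x < G.dist u y ↔ ¬ G.dist u1 x < G.dist u1 y) := by tauto
  have huu1xy : (u, u1) ∈ hypcl G (x, y) := ⟨hadjuu1, (theta_iff hm hxy hadjuu1).mpr iu⟩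
  exact ⟨v, v1, u, u1, hvv1, huu1xy, hu, hu1, hadjv, hadjuu1, hadju, hadju1⟩

private lemma transverse_of_carrier (hm : IsMedianGraph G) (hxy : G.Adj x y)
    (hab : G.Adj a b) (hne : hypcl G (x, y) ≠ hypcl G (a, b)) {v v1 : V}
    (hvv1 : (v, v1) ∈ hypcl G (x, y))
    (hv : v ∈ carrier G (a, b)) (hv1 : v1 ∈ carrier G (a, b)) :
    Transverse G (hypcl G (x, y)) (hypcl G (a, b)) := by
  by_cases hva : G.dist v a < G.dist v b
  · exact transverse_aux hm hxy hab hne hvv1 hv hv1 hva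
  · have hvb : G.dist v b < G.dist v a := by
      rcases grade hm hab v with h | h <;> omega
    have hsw : hypcl G (a, b) = hypcl G (b, a) := hypcl_swap a b
    rw [hsw]
    rw [carrier_swap] at hv hv1
    exact transverse_aux hm hxy hab.symm (hsw ▸ hne) hvv1 hv hv1 hvb

/-! ### The Helly property -/

private def IConvex (G : SimpleGraph V) (S : Set V) : Prop :=
  ∀ ⦃u⦄, u ∈ S → ∀ ⦃w⦄, w ∈ S → ∀ ⦃z⦄, G.dist u z + G.dist z w = G.dist u w → z ∈ S

private lemma iconvex_inter {S T : Set V} (hS : IConvex G S) (hT : IConvex G T) :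
    IConvex G (S ∩ T) := fun u hu w hw z hz => ⟨hS hu.1 hw.1 hz, hT hu.2 hw.2 hz⟩

private lemma iconvex_carrier (hm : IsMedianGraph G) (hxy : G.Adj x y) :
    IConvex G (carrier G (x, y)) :=
  fun u hu w hw z hz => carrier_conv hm hxy hu hw hz

private lemma med_mem (hm : IsMedianGraph G) {S T U : Set V}
    (hS : IConvex G S) (hT : IConvex G T) (hU : IConvex G U)
    {p q r : V} (hp : p ∈ S ∩ T) (hq : q ∈ T ∩ U) (hr : r ∈ S ∩ U) :
    ∃ m, m ∈ S ∧ m ∈ T ∧ m ∈ U := by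
  obtain ⟨m, ⟨h1, h2, h3⟩, -⟩ := hm.2 p q r
  exact ⟨m, hS hp.1 hr.1 h2, hT hp.2 hq.1 h1, hU hq.2 hr.2 h3⟩

private lemma helly (hm : IsMedianGraph G) :
    ∀ (n : ℕ) (l : List (Set V)), l.length = n →
      (∀ S ∈ l, IConvex G S) → (∀ S ∈ l, ∀ T ∈ l, (S ∩ T).Nonempty) →
      ∃ v, ∀ S ∈ l, v ∈ S := by
  intro n
  induction n with
  | zero =>
    intro l hl _ _
    obtain ⟨v⟩ := hm.1.nonempty
    refine ⟨v, ?_⟩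
    rw [List.length_eq_zero_iff] at hl
    subst hl
    simp
  | succ n IH =>
    intro l hl hconv hpair
    match l with
    | S :: l =>
      match l with
      | [] =>
        obtain ⟨v, hv⟩ := hpair S (by simp) S (by simp)
        refine ⟨v, ?_⟩
        intro T hT
        rw [List.mem_singleton] at hT
        subst hT
        exact hv.1
      | T0 :: l0 =>
        have hlen : ((T0 :: l0).map (fun T => S ∩ T)).length = n := by
          simpa using hl
        have hconv' : ∀ U ∈ (T0 :: l0).map (fun T => S ∩ T), IConvex G U := by
          intro U hU
          rw [List.mem_map] at hU
          obtain ⟨T, hT, rfl⟩ := hU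
          exact iconvex_inter (hconv S (by simp)) (hconv T (by simp [hT]))
        have hpair' : ∀ U ∈ (T0 :: l0).map (fun T => S ∩ T),
            ∀ U' ∈ (T0 :: l0).map (fun T => S ∩ T), (U ∩ U').Nonempty := by
          intro U hU U' hU'
          rw [List.mem_map] at hU hU'
          obtain ⟨T, hT, rfl⟩ := hU
          obtain ⟨T', hT', rfl⟩ := hU'
          obtain ⟨p, hp⟩ := hpair S (by simp) T (by simp [hT])
          obtain ⟨q, hq⟩ := hpair T (by simp [hT]) T' (by simp [hT'])
          obtain ⟨r, hr⟩ := hpair S (by simp) T' (by simp [hT'])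
          obtain ⟨m, h1, h2, h3⟩ := med_mem hm (hconv S (by simp))
            (hconv T (by simp [hT])) (hconv T' (by simp [hT'])) hp hq hr
          exact ⟨m, ⟨h1, h2⟩, ⟨h1, h3⟩⟩
        obtain ⟨v, hv⟩ := IH ((T0 :: l0).map (fun T => S ∩ T)) hlen hconv' hpair'
        refine ⟨v, ?_⟩
        intro U hU
        rcases List.mem_cons.mp hU with rfl | hU'
        · exact (hv (U ∩ T0) (by simp)).1
        · exact (hv (S ∩ U) (by rw [List.mem_map]; exact ⟨U, hU', rfl⟩)).2

/-! ### Common vertex for a contact clique -/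

private lemma adjTo_flip {h : Set (V × V)} (hh : IsHyperplane G h) (hv : AdjTo G h v) :
    ∃ u, (v, u) ∈ h ∧ G.Adj v u := by
  obtain ⟨⟨p, q⟩, hpq, rfl⟩ := hh
  obtain ⟨u, hu⟩ := adjTo_hypcl_iff.mp hv
  exact ⟨u, hu, hu.1⟩

private lemma carrier_nonempty_of_hyp {h : Set (V × V)} (hc : G.Connected)
    (hh : IsHyperplane G h) : ∃ v, AdjTo G h v := by
  obtain ⟨⟨p, q⟩, hpq, rfl⟩ := hh
  exact ⟨p, (p, q), self_mem_hypcl hc hpq, Or.inl rfl⟩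

private lemma iconvex_adjTo_of_hyp (hm : IsMedianGraph G) {h : Set (V × V)}
    (hh : IsHyperplane G h) : IConvex G {v | AdjTo G h v} := by
  obtain ⟨⟨p, q⟩, hpq, rfl⟩ := hh
  rw [show {v | AdjTo G {f | G.Adj f.1 f.2 ∧ Theta G (p, q) f} v}
      = carrier G (p, q) from carrier_eq_adjTo (p, q)]
  exact iconvex_carrier hm hpq

private lemma finset_common (hm : IsMedianGraph G) {C : Set (Set (V × V))}
    (hC : IsContactClique G C) {D : Set (Set (V × V))} (hDC : D ⊆ C) (hD : D.Finite) :
    ∃ v, ∀ h ∈ D, AdjTo G h v := by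
  classical
  set L := hD.toFinset.toList.map (fun h => {v | AdjTo G h v}) with hL
  have hmem : ∀ h ∈ D, {v | AdjTo G h v} ∈ L := by
    intro h hh
    rw [hL, List.mem_map]
    exact ⟨h, by simp [Finset.mem_toList, Set.Finite.mem_toFinset, hh], rfl⟩
  have hconv : ∀ S ∈ L, IConvex G S := by
    intro S hS
    rw [hL, List.mem_map] at hS
    obtain ⟨h, hh, rfl⟩ := hS
    rw [Finset.mem_toList, Set.Finite.mem_toFinset] at hh
    exact iconvex_adjTo_of_hyp hm (hC.1 h (hDC hh))
  have hpair : ∀ S ∈ L, ∀ T ∈ L, (S ∩ T).Nonempty := by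
    intro S hS T hT
    rw [hL, List.mem_map] at hS hT
    obtain ⟨h, hh, rfl⟩ := hS
    obtain ⟨h', hh', rfl⟩ := hT
    rw [Finset.mem_toList, Set.Finite.mem_toFinset] at hh hh'
    by_cases he : h = h'
    · subst he
      obtain ⟨v, hv⟩ := carrier_nonempty_of_hyp hm.1 (hC.1 h (hDC hh))
      exact ⟨v, hv, hv⟩
    · obtain ⟨v, hv1, hv2⟩ := hC.2 h (hDC hh) h' (hDC hh') he
      exact ⟨v, hv1, hv2⟩
  obtain ⟨v, hv⟩ := helly hm L.length L rfl hconv hpair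
  exact ⟨v, fun h hh => hv _ (hmem h hh)⟩

private lemma clique_common (hm : IsMedianGraph G) (hULF : UnifLocFinite G)
    {C : Set (Set (V × V))} (hC : IsContactClique G C) :
    ∃ v, ∀ h ∈ C, AdjTo G h v := by
  classical
  obtain ⟨N, hN⟩ := hULF
  have hfin : C.Finite := by
    by_contra hinf
    rw [← Set.not_infinite, not_not] at hinf
    obtain ⟨D, hDC, hDfin, hDcard⟩ := hinf.exists_subset_ncard_eq (N + 1)
    obtain ⟨v, hv⟩ := finset_common hm hC hDC hDfin
    -- map each hyperplane in D to a crossing neighbour of v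
    have pick : ∀ h ∈ D, ∃ u, (v, u) ∈ h ∧ G.Adj v u := by
      intro h hh
      exact adjTo_flip (hC.1 h (hDC hh)) (hv h hh)
    let g : Set (V × V) → V := fun h =>
      if hh : ∃ u, (v, u) ∈ h ∧ G.Adj v u then hh.choose else v
    have hg : ∀ h ∈ D, (v, g h) ∈ h ∧ G.Adj v (g h) := by
      intro h hh
      have hex := pick h hh
      simp only [g, dif_pos hex]
      exact hex.choose_spec
    have hinj : Set.InjOn g D := by
      intro h hh h' hh' heq
      by_contra hne
      have h1 := hg h hh
      have h2 := hg h' hh'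
      rw [heq] at h1
      exact hne (hyp_eq_of_mem hm (hC.1 h (hDC hh)) (hC.1 h' (hDC hh')) h1.1 h2.1)
    have himg : g '' D ⊆ G.neighborSet v := by
      rintro u ⟨h, hh, rfl⟩
      exact (hg h hh).2
    have hcard : (g '' D).ncard = N + 1 := by
      rw [Set.ncard_image_of_injOn hinj, hDcard]
    have hle : (g '' D).ncard ≤ N := le_trans (Set.ncard_le_ncard himg (hN v).1) (hN v).2
    omega
  exact finset_common hm hC (subset_refl C) hfin

/-! ### Assembling the theorem -/

private lemma wv_clique (v : V) : IsContactClique G (Wv G v) :=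
  ⟨fun h hh => hh.1, fun h hh h' hh' _ => ⟨v, hh.2, hh'.2⟩⟩

private lemma subset_wv_of_common {C : Set (Set (V × V))} (hC : IsContactClique G C)
    {v : V} (hv : ∀ h ∈ C, AdjTo G h v) : C ⊆ Wv G v :=
  fun h hh => ⟨hC.1 h hh, hv h hh⟩

private lemma wv_subset_eq (hm : IsMedianGraph G) (hext : ∀ v : V, ¬ LinkIsCone G v)
    {v w : V} (hsub : Wv G v ⊆ Wv G w) : v = w := by
  by_contra hne
  obtain ⟨v1, hadj, hd1⟩ := exists_adj_btw hm.1 hne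
  apply hext v
  refine ⟨hypcl G (v, v1),
    ⟨isHyperplane_hypcl hadj, (v, v1), self_mem_hypcl hm.1 hadj, Or.inl rfl⟩, ?_⟩
  intro h' hh' hne'
  obtain ⟨⟨a, b⟩, hab, rfl⟩ := hh'.1
  have hvc : v ∈ carrier G (a, b) := adjTo_hypcl_iff.mp hh'.2
  have hwc : w ∈ carrier G (a, b) := adjTo_hypcl_iff.mp (hsub hh').2
  have hbtwv : G.dist v v1 + G.dist v1 w = G.dist v w := by
    have := adj_dist hadj; omega
  have hv1c : v1 ∈ carrier G (a, b) := carrier_conv hm hab hvc hwc hbtwv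
  exact transverse_of_carrier hm hadj hab (Ne.symm hne')
    (self_mem_hypcl hm.1 hadj) hvc hv1c

end MedianCC


/-- for a uniformly locally finite CAT(0) cube complex with no extremal
vertices, `v ↦ Wv G v` is a bijection between vertices and maximal cliques of the
contact graph. -/
theorem vertices_biject_max_cliques (G : SimpleGraph V) (hG : IsMedianGraph G)
    (hULF : UnifLocFinite G) (hext : ∀ v : V, ¬ LinkIsCone G v) :
    (∀ v w : V, Wv G v = Wv G w → v = w) ∧
    (∀ C : Set (Set (V × V)), IsMaxContactClique G C ↔ ∃ v : V, C = Wv G v) := by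
  constructor
  · intro v w heq
    exact MedianCC.wv_subset_eq hG hext (le_of_eq heq)
  · intro C
    constructor
    · rintro ⟨hclique, hmax⟩
      obtain ⟨v, hv⟩ := MedianCC.clique_common hG hULF hclique
      have hsub : C ⊆ Wv G v := MedianCC.subset_wv_of_common hclique hv
      exact ⟨v, (hmax (Wv G v) (MedianCC.wv_clique v) hsub).symm⟩
    · rintro ⟨v, rfl⟩
      refine ⟨MedianCC.wv_clique v, ?_⟩
      intro C' hC' hsub
      obtain ⟨w, hw⟩ := MedianCC.clique_common hG hULF hC'
      have hsub' : C' ⊆ Wv G w := MedianCC.subset_wv_of_common hC' hw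
      have hvw : v = w := MedianCC.wv_subset_eq hG hext (hsub.trans hsub')
      subst hvw
      exact Set.Subset.antisymm hsub' hsub
end

section
/- Let X be a uniformly locally finite CAT(0) cube complex with no extremal vertices and such that no hyperplane of X has extremal vertices. Then the natural homomorphism ι : Aut(X) → Aut(C(X)) is a group isomorphism, with inverse the map ρ induced by the action of Aut(C(X)) on maximal cliques. -/
open SimpleGraph

variable {V : Type*}

namespace MedianCore
variable {G : SimpleGraph V}
def Side (G : SimpleGraph V) (e : V × V) (x : V) : Prop :=
  G.dist x e.1 < G.dist x e.2
def Crosses (G : SimpleGraph V) (e f : V × V) : Prop :=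
  ¬ (Side G e f.1 ↔ Side G e f.2)
def SameWall (G : SimpleGraph V) (e f : V × V) : Prop :=
  (∀ x, Side G e x ↔ Side G f x) ∨ (∀ x, Side G e x ↔ ¬ Side G f x)
section basic
variable (hG : IsMedianGraph G)
include hG
lemma conn : G.Connected := hG.1

/-- K1 : parity along an edge. -/
lemma adj_dist_cases {u v : V} (h : G.Adj u v) (x : V) :
    G.dist x v = G.dist x u + 1 ∨ G.dist x u = G.dist x v + 1 := by
  obtain ⟨m, ⟨h1, h2, h3⟩, -⟩ := hG.2 x u v
  have hd : G.dist u v = 1 := dist_eq_one_iff_adj.mpr h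
  rw [hd] at h3
  have : G.dist u m = 0 ∨ G.dist m v = 0 := by omega
  have hcm : G.dist v u = G.dist u v := dist_comm
  rcases this with h0 | h0
  · have : u = m := (hG.1.dist_eq_zero_iff).mp h0
    subst this
    left; omega
  · have : m = v := (hG.1.dist_eq_zero_iff).mp h0
    subst this
    right; omega

lemma adj_dist_ne {u v : V} (h : G.Adj u v) (x : V) : G.dist x u ≠ G.dist x v := by
  rcases adj_dist_cases hG h x with h' | h' <;> omega

/-- K2 : Theta is the crossing relation. -/
lemma theta_iff_crosses {e f : V × V} (he : G.Adj e.1 e.2) (hf : G.Adj f.1 f.2) :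
    Theta G e f ↔ Crosses G e f := by
  have A := adj_dist_cases hG he f.1
  have B := adj_dist_cases hG he f.2
  unfold Theta Crosses Side
  rw [dist_comm (u := e.1) (v := f.1), dist_comm (u := e.2) (v := f.2),
    dist_comm (u := e.1) (v := f.2), dist_comm (u := e.2) (v := f.1)]
  omega

lemma crosses_self {e : V × V} (he : G.Adj e.1 e.2) : Crosses G e e := by
  have h1 : G.dist e.1 e.1 = 0 := by simp
  have h2 : G.dist e.1 e.2 = 1 := dist_eq_one_iff_adj.mpr he
  have h3 : G.dist e.2 e.2 = 0 := by simp
  have h4 : G.dist e.2 e.1 = 1 := by rw [dist_comm]; exact h2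
  unfold Crosses Side
  omega

lemma crosses_swap {e f : V × V} (hf : G.Adj f.1 f.2) (h : Crosses G e f) :
    Crosses G e (f.2, f.1) := by
  unfold Crosses Side at *
  simp only at *
  omega

lemma side_swap {f : V × V} (hf : G.Adj f.1 f.2) (x : V) :
    Side G (f.2, f.1) x ↔ ¬ Side G f x := by
  have := adj_dist_ne hG hf x
  unfold Side
  simp only
  omega

/-- step towards a target along a geodesic. -/
lemma exists_step {p r : V} (h : G.dist p r ≠ 0) :
    ∃ q, G.Adj p q ∧ G.dist q r + 1 = G.dist p r := by
  obtain ⟨w, hw⟩ := hG.1.exists_walk_length_eq_dist p r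
  cases w with
  | nil => simp at h
  | @cons p q r h' w' =>
    refine ⟨q, h', ?_⟩
    simp only [Walk.length_cons] at hw
    have h1 : G.dist q r ≤ w'.length := dist_le w'
    have h2 : G.dist p r ≤ 1 + G.dist q r := by
      calc G.dist p r ≤ G.dist p q + G.dist q r := hG.1.dist_triangle
        _ ≤ 1 + G.dist q r := by
            have : G.dist p q = 1 := dist_eq_one_iff_adj.mpr h'
            omega
    omega

/-- QL : quadrangle lemma. -/
lemma quad {v a b x : V} (hva : G.Adj v a) (hvb : G.Adj v b) (hab : a ≠ b)
    (ha : G.dist x a + 1 = G.dist x v) (hb : G.dist x b + 1 = G.dist x v) :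
    ∃ w, G.Adj a w ∧ G.Adj b w ∧ G.dist x w + 2 = G.dist x v := by
  have hnadj : ¬ G.Adj a b := fun h => adj_dist_ne hG h x (by omega)
  have hab2 : G.dist a b = 2 := by
    have h1 : G.dist a b ≤ 2 := by
      calc G.dist a b ≤ G.dist a v + G.dist v b := hG.1.dist_triangle
        _ ≤ 2 := by
          have : G.dist a v = 1 := dist_eq_one_iff_adj.mpr hva.symm
          have : G.dist v b = 1 := dist_eq_one_iff_adj.mpr hvb
          omega
    have h2 : G.dist a b ≠ 1 := fun h => hnadj (dist_eq_one_iff_adj.mp h)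
    have h3 : G.dist a b ≠ 0 := fun h => hab ((hG.1.dist_eq_zero_iff).mp h)
    omega
  obtain ⟨m, ⟨h1, h2, h3⟩, -⟩ := hG.2 a b x
  rw [hab2] at h1
  have hxa : G.dist a x = G.dist x a := dist_comm
  have hxb : G.dist b x = G.dist x b := dist_comm
  have hmb : G.dist m b = G.dist b m := dist_comm
  have hxm : G.dist m x = G.dist x m := dist_comm
  have ham : G.dist a m = 1 := by omega
  have hbm : G.dist b m = 1 := by omega
  refine ⟨m, dist_eq_one_iff_adj.mp ham, dist_eq_one_iff_adj.mp hbm, ?_⟩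
  omega


-- Part B starts here
lemma square_aux {a b c d x : V} (hab : G.Adj a b) (hbc : G.Adj b c) (hcd : G.Adj c d)
    (hda : G.Adj d a) (hac : a ≠ c) (hbd : b ≠ d)
    (h1 : G.dist x a < G.dist x b) (h2 : G.dist x c < G.dist x d) : False := by
  have hb' : G.dist x b = G.dist x a + 1 := by
    rcases adj_dist_cases hG hab x with h | h <;> omega
  have hDd := adj_dist_cases hG hcd x
  have hDa := adj_dist_cases hG hda x
  have hDc := adj_dist_cases hG hbc x
  have hd' : G.dist x d = G.dist x c + 1 := by omega
  have hc' : G.dist x c = G.dist x a := by omega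
  have ht : G.dist x a ≠ 0 := by
    intro h0
    have hxa : x = a := (hG.1.dist_eq_zero_iff).mp (by rwa [dist_comm] at h0 ⊢)
    have hxc : x = c := by
      have : G.dist x c = 0 := by omega
      exact (hG.1.dist_eq_zero_iff).mp this
    exact hac (hxa ▸ hxc)
  have hnac : ¬ G.Adj a c := fun h => adj_dist_ne hG h x (by omega)
  have hac2 : G.dist a c = 2 := by
    have hle : G.dist a c ≤ 2 := by
      have h1' : G.dist a b = 1 := dist_eq_one_iff_adj.mpr hab
      have h2' : G.dist b c = 1 := dist_eq_one_iff_adj.mpr hbc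
      calc G.dist a c ≤ G.dist a b + G.dist b c := hG.1.dist_triangle
        _ ≤ 2 := by omega
    have hne1 : G.dist a c ≠ 1 := fun h => hnac (dist_eq_one_iff_adj.mp h)
    have hne0 : G.dist a c ≠ 0 := fun h => hac ((hG.1.dist_eq_zero_iff).mp h)
    omega
  obtain ⟨m, ⟨hm1, hm2, hm3⟩, -⟩ := hG.2 a c x
  rw [hac2] at hm1
  have e1 : G.dist a x = G.dist x a := dist_comm
  have e2 : G.dist c x = G.dist x c := dist_comm
  have e3 : G.dist m c = G.dist c m := dist_comm
  have ham : G.dist a m = 1 := by omega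
  have hcm : G.dist c m = 1 := by omega
  have hxm : G.dist m x + 1 = G.dist x a := by omega
  have hadam : G.Adj a m := dist_eq_one_iff_adj.mp ham
  have hadcm : G.Adj c m := dist_eq_one_iff_adj.mp hcm
  have e4 : G.dist x m = G.dist m x := dist_comm
  have hmb : m ≠ b := by
    intro h
    rw [h] at hxm
    have : G.dist b x = G.dist x b := SimpleGraph.dist_comm
    omega
  have hmd : m ≠ d := by
    intro h
    rw [h] at hxm
    have : G.dist d x = G.dist x d := SimpleGraph.dist_comm
    omega
  -- b, d, m are three distinct common neighbours of a and c
  have hnbd : ¬ G.Adj b d := fun h => adj_dist_ne hG h x (by omega)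
  have hnbm : ¬ G.Adj b m := fun h => adj_dist_ne hG h a
    (by
      have : G.dist a b = 1 := dist_eq_one_iff_adj.mpr hab
      omega)
  have hndm : ¬ G.Adj d m := fun h => adj_dist_ne hG h a
    (by
      have : G.dist a d = 1 := dist_eq_one_iff_adj.mpr hda.symm
      omega)
  have dab : G.dist a b = 1 := dist_eq_one_iff_adj.mpr hab
  have dad : G.dist a d = 1 := dist_eq_one_iff_adj.mpr hda.symm
  have dcb : G.dist c b = 1 := dist_eq_one_iff_adj.mpr hbc.symm
  have dcd : G.dist c d = 1 := dist_eq_one_iff_adj.mpr hcd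
  have dist2 : ∀ p q : V, p ≠ q → ¬ G.Adj p q → G.dist a p = 1 → G.dist a q = 1 →
      G.dist p q = 2 := by
    intro p q hpq hnpq hp hq
    have hle : G.dist p q ≤ 2 := by
      have hpa : G.dist p a = 1 := by rwa [SimpleGraph.dist_comm] at hp
      calc G.dist p q ≤ G.dist p a + G.dist a q := hG.1.dist_triangle
        _ ≤ 2 := by omega
    have h1' : G.dist p q ≠ 1 := fun h => hnpq (dist_eq_one_iff_adj.mp h)
    have h0' : G.dist p q ≠ 0 := fun h => hpq ((hG.1.dist_eq_zero_iff).mp h)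
    omega
  have dbd : G.dist b d = 2 := dist2 b d hbd hnbd dab dad
  have dbm : G.dist b m = 2 := dist2 b m hmb.symm hnbm dab ham
  have ddm : G.dist d m = 2 := dist2 d m hmd.symm hndm dad ham
  have dba : G.dist b a = 1 := by rwa [SimpleGraph.dist_comm] at dab
  have dbc : G.dist b c = 1 := by rwa [SimpleGraph.dist_comm] at dcb
  have dda : G.dist d a = 1 := by rwa [SimpleGraph.dist_comm] at dad
  have ddc : G.dist d c = 1 := by rwa [SimpleGraph.dist_comm] at dcd
  have ema : G.dist a m = G.dist m a := SimpleGraph.dist_comm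
  have emc : G.dist c m = G.dist m c := SimpleGraph.dist_comm
  have hmed : a = c := (hG.2 b d m).unique
    ⟨by omega, by omega, by omega⟩
    ⟨by omega, by omega, by omega⟩
  exact hac hmed

lemma square_side {a b c d : V} (hab : G.Adj a b) (hbc : G.Adj b c) (hcd : G.Adj c d)
    (hda : G.Adj d a) (hac : a ≠ c) (hbd : b ≠ d) (x : V) :
    Side G (a, b) x ↔ Side G (d, c) x := by
  have t1 := adj_dist_ne hG hab x
  have t2 := adj_dist_ne hG hcd x
  unfold Side
  simp only
  constructor
  · intro h
    by_contra h'
    exact square_aux hG hab hbc hcd hda hac hbd h (by omega)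
  · intro h
    by_contra h'
    exact square_aux hG hab.symm hda.symm hcd.symm hbc.symm hbd hac (by omega) h

lemma side_swap' {a b : V} (h : G.Adj a b) (x : V) :
    Side G (b, a) x ↔ ¬ Side G (a, b) x := by
  have := adj_dist_ne hG h x
  unfold Side
  simp only
  omega

/-- Djoković : crossing edges have the same side function up to a flip. -/
lemma samewall_aux : ∀ N : ℕ, ∀ e f : V × V, G.Adj e.1 e.2 → G.Adj f.1 f.2 →
    Side G e f.1 → ¬ Side G e f.2 → G.dist f.1 e.1 + G.dist f.2 e.1 ≤ N →
    SameWall G e f := by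
  intro N
  induction N using Nat.strong_induction_on with
  | _ N IH =>
  intro e f he hf hs1 hs2 hbound
  obtain ⟨n, hn⟩ : ∃ n, G.dist f.1 e.1 = n := ⟨_, rfl⟩
  rw [hn] at hbound
  have hf1e2 : G.dist f.1 e.2 = n + 1 := by
    have := adj_dist_cases hG he f.1
    have hs1' : G.dist f.1 e.1 < G.dist f.1 e.2 := hs1
    omega
  have hf2 : G.dist f.2 e.1 = G.dist f.2 e.2 + 1 := by
    have := adj_dist_cases hG he f.2
    have hs2' : ¬ (G.dist f.2 e.1 < G.dist f.2 e.2) := hs2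
    omega
  rcases Nat.eq_zero_or_pos n with hn0 | hnpos
  · -- base case : f = e
    have hfe1 : f.1 = e.1 := (hG.1.dist_eq_zero_iff).mp (by omega)
    have h21 : G.dist f.2 e.1 = 1 := by
      rw [← hfe1]
      exact dist_eq_one_iff_adj.mpr hf.symm
    have h22 : G.dist f.2 e.2 = 0 := by omega
    have hfe2 : f.2 = e.2 := (hG.1.dist_eq_zero_iff).mp h22
    have : f = e := Prod.ext hfe1 hfe2
    rw [this]
    exact Or.inl fun x => Iff.rfl
  · -- inductive step
    obtain ⟨u, hadj_u, hu⟩ := exists_step hG (p := f.1) (r := e.1) (by omega)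
    rw [hn] at hu
    have hue2 : G.dist u e.2 = n := by
      have hK := adj_dist_cases hG he u
      have htr : G.dist f.1 e.2 ≤ G.dist f.1 u + G.dist u e.2 := hG.1.dist_triangle
      have hd1 : G.dist f.1 u = 1 := dist_eq_one_iff_adj.mpr hadj_u
      omega
    have hSu : Side G e u := by
      show G.dist u e.1 < G.dist u e.2
      omega
    have hK2 := adj_dist_cases hG hf e.1
    rw [SimpleGraph.dist_comm (v := f.1), SimpleGraph.dist_comm (v := f.2), hn] at hK2
    rcases hK2 with hA | hB
    · -- d f.2 e.1 = n + 1
      have hf2e1 : G.dist f.2 e.1 = n + 1 := by omega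
      have hf2e2 : G.dist f.2 e.2 = n := by omega
      have huf2 : u ≠ f.2 := by
        intro hctr; rw [hctr] at hu; omega
      obtain ⟨w, hadj_uw, hadj_f2w, hw⟩ := quad hG hadj_u hf huf2
        (ha := by rw [SimpleGraph.dist_comm (u := e.2) (v := u),
                  SimpleGraph.dist_comm (u := e.2) (v := f.1)]; omega)
        (hb := by rw [SimpleGraph.dist_comm (u := e.2) (v := f.2),
                  SimpleGraph.dist_comm (u := e.2) (v := f.1)]; omega)
      rw [SimpleGraph.dist_comm (u := e.2) (v := w),
          SimpleGraph.dist_comm (u := e.2) (v := f.1)] at hw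
      -- hw : G.dist w e.2 + 2 = n + 1
      have hwe1 : G.dist w e.1 = n := by
        have hK := adj_dist_cases hG he w
        have htr : G.dist f.2 e.1 ≤ G.dist f.2 w + G.dist w e.1 := hG.1.dist_triangle
        have hd1 : G.dist f.2 w = 1 := dist_eq_one_iff_adj.mpr hadj_f2w
        omega
      have hSw : ¬ Side G e w := by
        show ¬ (G.dist w e.1 < G.dist w e.2)
        omega
      have hrec : SameWall G e (u, w) :=
        IH (G.dist u e.1 + G.dist w e.1) (by omega) e (u, w) he hadj_uw hSu hSw le_rfl
      have hsq : ∀ x, Side G (u, w) x ↔ Side G (f.1, f.2) x := by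
        intro x
        exact square_side hG hadj_uw hadj_f2w.symm hf.symm hadj_u huf2
          (by intro hctr; rw [hctr] at hw; omega) x
      have hfpair : f = (f.1, f.2) := rfl
      rcases hrec with h' | h'
      · left; intro x; rw [h' x, hsq x, ← hfpair]
      · right; intro x; rw [h' x, hsq x, ← hfpair]
    · -- d f.2 e.1 + 1 = n  (f.2 ahead)
      have hf2e1 : G.dist f.2 e.1 + 1 = n := by omega
      have hf2e2 : G.dist f.2 e.2 + 2 = n := by omega
      have huf2 : u ≠ f.2 := by
        intro hctr; rw [hctr] at hue2; omega
      obtain ⟨w, hadj_uw, hadj_f2w, hw⟩ := quad hG hadj_u hf huf2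
        (ha := by rw [SimpleGraph.dist_comm (u := e.1) (v := u),
                  SimpleGraph.dist_comm (u := e.1) (v := f.1), hn]; omega)
        (hb := by rw [SimpleGraph.dist_comm (u := e.1) (v := f.2),
                  SimpleGraph.dist_comm (u := e.1) (v := f.1), hn]; omega)
      rw [SimpleGraph.dist_comm (u := e.1) (v := w),
          SimpleGraph.dist_comm (u := e.1) (v := f.1), hn] at hw
      -- hw : G.dist w e.1 + 2 = n
      have hK := adj_dist_cases hG he w
      rcases hK with hw2 | hw2
      · -- d w e.2 = d w e.1 + 1 : impossible
        exfalso
        have hSw : Side G e w := by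
          show G.dist w e.1 < G.dist w e.2
          omega
        have hrec : SameWall G e (w, f.2) :=
          IH (G.dist w e.1 + G.dist f.2 e.1) (by omega) e (w, f.2) he hadj_f2w.symm hSw hs2 le_rfl
        have hsq : ∀ x, Side G (f.1, u) x ↔ Side G (f.2, w) x := by
          intro x
          exact square_side hG hadj_u hadj_uw hadj_f2w.symm hf.symm
            (by intro hctr; rw [← hctr] at hw; omega) huf2 x
        have hq1 : Side G (f.1, u) f.1 := by
          show G.dist f.1 f.1 < G.dist f.1 u
          have e1 : G.dist f.1 f.1 = 0 := by simp
          have e2 : G.dist f.1 u = 1 := dist_eq_one_iff_adj.mpr hadj_u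
          omega
        have hq2 : ¬ Side G (f.1, u) u := by
          show ¬ (G.dist u f.1 < G.dist u u)
          have e1 : G.dist u u = 0 := by simp
          omega
        rcases hrec with h' | h'
        · have hb1 : Side G (w, f.2) f.1 := (h' f.1).mp hs1
          rw [side_swap' hG hadj_f2w f.1] at hb1
          rw [← hsq f.1] at hb1
          exact hb1 hq1
        · have hb2 : ¬ Side G (w, f.2) u := (h' u).mp hSu
          rw [side_swap' hG hadj_f2w u, not_not] at hb2
          rw [← hsq u] at hb2
          exact hq2 hb2
      · -- d w e.2 + 1 = d w e.1
        have hSw : ¬ Side G e w := by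
          show ¬ (G.dist w e.1 < G.dist w e.2)
          omega
        have hrec : SameWall G e (u, w) :=
          IH (G.dist u e.1 + G.dist w e.1) (by omega) e (u, w) he hadj_uw hSu hSw le_rfl
        have hsq : ∀ x, Side G (u, w) x ↔ Side G (f.1, f.2) x := by
          intro x
          exact square_side hG hadj_uw hadj_f2w.symm hf.symm hadj_u huf2
            (by intro hctr; rw [hctr] at hw; omega) x
        have hfpair : f = (f.1, f.2) := rfl
        rcases hrec with h' | h'
        · left; intro x; rw [h' x, hsq x, ← hfpair]
        · right; intro x; rw [h' x, hsq x, ← hfpair]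

lemma samewall_of_crosses {e f : V × V} (he : G.Adj e.1 e.2) (hf : G.Adj f.1 f.2)
    (h : Crosses G e f) : SameWall G e f := by
  by_cases hs : Side G e f.1
  · have hs2 : ¬ Side G e f.2 := by unfold Crosses at h; tauto
    exact samewall_aux hG _ e f he hf hs hs2 le_rfl
  · have hs2 : Side G e f.2 := by unfold Crosses at h; tauto
    have hrev := samewall_aux hG _ e (f.2, f.1) he hf.symm hs2 (by simpa using hs) le_rfl
    rcases hrev with h' | h'
    · right; intro x
      rw [h' x]
      have hss : Side G (f.2, f.1) x ↔ ¬ Side G (f.1, f.2) x := side_swap' hG hf x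
      have hfpair : f = (f.1, f.2) := rfl
      rw [← hfpair] at hss
      rw [hss]
    · left; intro x
      rw [h' x]
      have hss : Side G (f.2, f.1) x ↔ ¬ Side G (f.1, f.2) x := side_swap' hG hf x
      have hfpair : f = (f.1, f.2) := rfl
      rw [← hfpair] at hss
      rw [hss, not_not]

lemma crosses_congr {e f : V × V} (h : SameWall G e f) (g : V × V) :
    Crosses G e g ↔ Crosses G f g := by
  unfold Crosses
  rcases h with h' | h'
  · rw [h' g.1, h' g.2]
  · rw [h' g.1, h' g.2]; tauto

/-! ### Hyperplane API -/

lemma hyp_adj {h : Set (V × V)} (hh : IsHyperplane G h) {f : V × V} (hf : f ∈ h) :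
    G.Adj f.1 f.2 := by
  obtain ⟨e, he, rfl⟩ := hh
  exact hf.1

/-- Characterisation of a hyperplane by any of its member edges. -/
lemma hyp_char {h : Set (V × V)} (hh : IsHyperplane G h) {f : V × V} (hf : f ∈ h) :
    ∀ g : V × V, g ∈ h ↔ (G.Adj g.1 g.2 ∧ Crosses G f g) := by
  obtain ⟨e, he, rfl⟩ := hh
  obtain ⟨hfadj, hfth⟩ := hf
  have hcr : Crosses G e f := (theta_iff_crosses hG he hfadj).mp hfth
  have hsw : SameWall G e f := samewall_of_crosses hG he hfadj hcr
  intro g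
  constructor
  · rintro ⟨hgadj, hgth⟩
    exact ⟨hgadj, (crosses_congr hG hsw g).mp ((theta_iff_crosses hG he hgadj).mp hgth)⟩
  · rintro ⟨hgadj, hgcr⟩
    exact ⟨hgadj, (theta_iff_crosses hG he hgadj).mpr ((crosses_congr hG hsw g).mpr hgcr)⟩

lemma hyp_eq_of_mem {h k : Set (V × V)} (hh : IsHyperplane G h) (hk : IsHyperplane G k)
    {f : V × V} (hf : f ∈ h) (hf' : f ∈ k) : h = k := by
  ext g
  rw [hyp_char hG hh hf g, hyp_char hG hk hf' g]

lemma hyp_mem_theta {h : Set (V × V)} (hh : IsHyperplane G h) {f g : V × V}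
    (hf : f ∈ h) (hg : g ∈ h) : Theta G f g := by
  have hfadj := hyp_adj hG hh hf
  have hgadj := hyp_adj hG hh hg
  exact (theta_iff_crosses hG hfadj hgadj).mpr (((hyp_char hG hh hf) g).mp hg).2

lemma hyp_mem_crosses {h : Set (V × V)} (hh : IsHyperplane G h) {f g : V × V}
    (hf : f ∈ h) (hg : g ∈ h) : Crosses G f g :=
  (((hyp_char hG hh hf) g).mp hg).2

lemma hyp_self_mem {a b : V} (hab : G.Adj a b) :
    (a, b) ∈ {f : V × V | G.Adj f.1 f.2 ∧ Theta G (a, b) f} := by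
  refine ⟨hab, ?_⟩
  exact (theta_iff_crosses hG hab hab).mpr (crosses_self hG hab)

/-- The hyperplane dual to an edge. -/
lemma edge_hyp {a b : V} (hab : G.Adj a b) :
    IsHyperplane G {f : V × V | G.Adj f.1 f.2 ∧ Theta G (a, b) f} :=
  ⟨(a, b), hab, rfl⟩

lemma hyp_mem_swap {h : Set (V × V)} (hh : IsHyperplane G h) {a b : V}
    (hf : (a, b) ∈ h) : (b, a) ∈ h := by
  have hadj : G.Adj a b := hyp_adj hG hh hf
  rw [hyp_char hG hh hf]
  refine ⟨hadj.symm, ?_⟩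
  exact crosses_swap hG (f := (a,b)) hadj (crosses_self hG hadj)

lemma adjTo_iff {h : Set (V × V)} (hh : IsHyperplane G h) (v : V) :
    AdjTo G h v ↔ ∃ a, (v, a) ∈ h := by
  constructor
  · rintro ⟨e, he, rfl | hr⟩
    · exact ⟨e.2, he⟩
    · refine ⟨e.1, ?_⟩
      have hsw := hyp_mem_swap hG hh (a := e.1) (b := e.2) he
      rwa [hr] at hsw
  · rintro ⟨a, ha⟩
    exact ⟨(v, a), ha, Or.inl rfl⟩

lemma adjTo_of_mem_fst {h : Set (V × V)} {a b : V} (hf : (a, b) ∈ h) : AdjTo G h a :=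
  ⟨(a, b), hf, Or.inl rfl⟩

lemma adjTo_of_mem_snd {h : Set (V × V)} {a b : V} (hf : (a, b) ∈ h) : AdjTo G h b :=
  ⟨(a, b), hf, Or.inr rfl⟩

/-- Existence of a crossing edge on a geodesic between points on opposite sides. -/
lemma exists_crossing : ∀ D : ℕ, ∀ (e : V × V) (x y : V), Side G e x → ¬ Side G e y →
    G.dist x y ≤ D →
    ∃ z₁ z₂ : V, G.Adj z₁ z₂ ∧ Side G e z₁ ∧ ¬ Side G e z₂ ∧
      G.dist x z₁ + G.dist z₂ y + 1 = G.dist x y := by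
  intro D
  induction D with
  | zero =>
    intro e x y hx hy hD
    exfalso
    have : x = y := (hG.1.dist_eq_zero_iff).mp (by omega)
    rw [this] at hx
    exact hy hx
  | succ D IH =>
    intro e x y hx hy hD
    have hne : G.dist x y ≠ 0 := by
      intro h0
      have : x = y := (hG.1.dist_eq_zero_iff).mp h0
      rw [this] at hx
      exact hy hx
    obtain ⟨q, hq, hqd⟩ := exists_step hG (p := x) (r := y) hne
    by_cases hSq : Side G e q
    · obtain ⟨z₁, z₂, h1, h2, h3, h4⟩ := IH e q y hSq hy (by omega)
      refine ⟨z₁, z₂, h1, h2, h3, ?_⟩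
      have hxz : G.dist x z₁ = G.dist q z₁ + 1 := by
        have ht1 : G.dist x z₁ ≤ G.dist x q + G.dist q z₁ := hG.1.dist_triangle
        have ht2 : G.dist x y ≤ G.dist x z₁ + G.dist z₁ y := hG.1.dist_triangle
        have ht3 : G.dist z₁ y ≤ G.dist z₁ z₂ + G.dist z₂ y := hG.1.dist_triangle
        have hd1 : G.dist x q = 1 := dist_eq_one_iff_adj.mpr hq
        have hd2 : G.dist z₁ z₂ = 1 := dist_eq_one_iff_adj.mpr h1
        omega
      omega
    · exact ⟨x, q, hq, hx, hSq, by
        have : G.dist x x = 0 := by simp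
        omega⟩

/-- Carrier step : if `k` has an edge at `p` and an edge at `r`, it has an edge at any
neighbour of `p` towards `r`. -/
lemma carrier_step {k : Set (V × V)} (hk : IsHyperplane G k) :
    ∀ D : ℕ, ∀ p a r q : V, (p, a) ∈ k → AdjTo G k r → G.Adj p q →
    G.dist q r + 1 = G.dist p r → G.dist p r ≤ D → ∃ b, (q, b) ∈ k := by
  intro D
  induction D using Nat.strong_induction_on with
  | _ D IH =>
  intro p a r q hpa hr hpq hq hD
  have hpadj : G.Adj p a := hyp_adj hG hk hpa
  rcases Nat.lt_or_ge (G.dist p r) 2 with hsmall | hbig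
  · -- base : q = r
    have : G.dist q r = 0 := by omega
    have hqr : q = r := (hG.1.dist_eq_zero_iff).mp this
    obtain ⟨c, hc⟩ := (adjTo_iff hG hk r).mp hr
    exact ⟨c, by rw [hqr]; exact hc⟩
  · by_cases hcr : Crosses G (p, a) (p, q)
    · -- the edge (p,q) itself is in k
      have : (p, q) ∈ k := by
        rw [hyp_char hG hk hpa]
        exact ⟨hpq, hcr⟩
      exact ⟨p, hyp_mem_swap hG hk this⟩
    · have hSp : Side G (p, a) p := by
        show G.dist p p < G.dist p a
        have e1 : G.dist p p = 0 := by simp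
        have e2 : G.dist p a = 1 := dist_eq_one_iff_adj.mpr hpadj
        omega
      have hSq : Side G (p, a) q := by
        unfold Crosses at hcr
        simp only [not_not] at hcr
        exact hcr.mp hSp
      have hSa : ¬ Side G (p, a) a := by
        have hcs := crosses_self hG (e := (p, a)) hpadj
        unfold Crosses at hcs
        tauto
      by_cases hSr : Side G (p, a) r
      · -- r on the same side : main construction
        obtain ⟨c, hc⟩ := (adjTo_iff hG hk r).mp hr
        have hcadj : G.Adj r c := hyp_adj hG hk hc
        have hSc : ¬ Side G (p, a) c := by
          have := hyp_mem_crosses hG hk hpa hc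
          unfold Crosses at this
          simp only at this
          tauto
        have haq : a ≠ q := fun hctr => hSa (hctr ▸ hSq)
        by_cases hadj_qa : G.Adj q a
        · refine ⟨a, ?_⟩
          rw [hyp_char hG hk hpa]
          refine ⟨hadj_qa, ?_⟩
          unfold Crosses
          simp only
          tauto
        · -- build a square
          obtain ⟨n, hn⟩ : ∃ n, G.dist p r = n := ⟨_, rfl⟩
          have hqr : G.dist q r + 1 = n := by omega
          have har := adj_dist_cases hG hpadj.symm r  -- rel. d r p and d r a
          rw [SimpleGraph.dist_comm (u := r) (v := a), SimpleGraph.dist_comm (u := r) (v := p), hn] at har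
          -- har : d a r = n ± 1
          have hth := hyp_mem_theta hG hk hpa hc
          unfold Theta at hth
          simp only at hth
          -- hth : d p r + d a c ≠ d p c + d a r
          have hdrc : G.dist r c = 1 := dist_eq_one_iff_adj.mpr hcadj
          rcases har with hnear | hfar
          · -- d a r = n - 1 : quadrangle with x := r
            obtain ⟨w, haw, hqw, hw⟩ := quad hG (x := r) hpadj hpq haq
              (ha := by
                have e1 : G.dist r a = G.dist a r := SimpleGraph.dist_comm
                have e2 : G.dist r p = G.dist p r := SimpleGraph.dist_comm
                omega)
              (hb := by
                have e2 : G.dist r p = G.dist p r := SimpleGraph.dist_comm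
                have e3 : G.dist r q = G.dist q r := SimpleGraph.dist_comm
                omega)
            -- square p a w q
            have hpw : p ≠ w := by
              intro hctr
              rw [← hctr] at hw
              omega
            have hsq := square_side hG (a := p) (b := a) (c := w) (d := q)
              hpadj haw hqw.symm hpq.symm hpw haq
            have hsw : SameWall G (p, a) (q, w) := Or.inl hsq
            refine ⟨w, ?_⟩
            rw [hyp_char hG hk hpa]
            exact ⟨hqw, (crosses_congr hG hsw (q, w)).mpr (crosses_self hG (e := (q, w)) hqw)⟩
          · -- d a r = n + 1
            have hpc : G.dist p c = n + 1 := by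
              have hK := adj_dist_cases hG hcadj p
              have t1 : G.dist a c ≤ G.dist a p + G.dist p c := hG.1.dist_triangle
              have t2 : G.dist a r ≤ G.dist a c + G.dist c r := hG.1.dist_triangle
              have e1 : G.dist a p = 1 := dist_eq_one_iff_adj.mpr hpadj.symm
              have e2 : G.dist c r = 1 := by rwa [SimpleGraph.dist_comm] at hdrc
              have e3 : G.dist p c = G.dist c p := SimpleGraph.dist_comm
              rcases hK with h1 | h1 <;> omega
            have hac : G.dist a c = n := by
              have hK := adj_dist_cases hG hcadj a
              have t2 : G.dist a r ≤ G.dist a c + G.dist c r := hG.1.dist_triangle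
              have e2 : G.dist c r = 1 := by rwa [SimpleGraph.dist_comm] at hdrc
              omega
            have hqc : G.dist q c = n := by
              have hK1 := adj_dist_cases hG hcadj q
              have hK2 := adj_dist_cases hG hpq c
              have e5 : G.dist c q = G.dist q c := SimpleGraph.dist_comm
              have e6 : G.dist c p = G.dist p c := SimpleGraph.dist_comm
              omega
            obtain ⟨w, haw, hqw, hw⟩ := quad hG (x := c) hpadj hpq haq
              (ha := by
                have e1 : G.dist c a = G.dist a c := SimpleGraph.dist_comm
                have e2 : G.dist c p = G.dist p c := SimpleGraph.dist_comm
                omega)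
              (hb := by
                have e2 : G.dist c p = G.dist p c := SimpleGraph.dist_comm
                have e3 : G.dist c q = G.dist q c := SimpleGraph.dist_comm
                omega)
            have hpw : p ≠ w := by
              intro hctr
              rw [← hctr] at hw
              omega
            have hsq := square_side hG (a := p) (b := a) (c := w) (d := q)
              hpadj haw hqw.symm hpq.symm hpw haq
            have hsw : SameWall G (p, a) (q, w) := Or.inl hsq
            refine ⟨w, ?_⟩
            rw [hyp_char hG hk hpa]
            exact ⟨hqw, (crosses_congr hG hsw (q, w)).mpr (crosses_self hG (e := (q, w)) hqw)⟩
      · -- r on the far side : move the target closer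
        obtain ⟨z₁, z₂, hz, hz1, hz2, hzd⟩ := exists_crossing hG (G.dist q r) (p, a) q r hSq hSr le_rfl
        have hzk : (z₁, z₂) ∈ k := by
          rw [hyp_char hG hk hpa]
          exact ⟨hz, by unfold Crosses; simp only; tauto⟩
        have hd1 : G.dist p z₁ = G.dist q z₁ + 1 := by
          have t1 : G.dist p z₁ ≤ G.dist p q + G.dist q z₁ := hG.1.dist_triangle
          have t2 : G.dist p r ≤ G.dist p z₁ + G.dist z₁ r := hG.1.dist_triangle
          have t3 : G.dist z₁ r ≤ G.dist z₁ z₂ + G.dist z₂ r := hG.1.dist_triangle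
          have e1 : G.dist p q = 1 := dist_eq_one_iff_adj.mpr hpq
          have e2 : G.dist z₁ z₂ = 1 := dist_eq_one_iff_adj.mpr hz
          have e3 : G.dist z₂ r = G.dist r z₂ := SimpleGraph.dist_comm
          have e4 : G.dist z₂ r = G.dist z₂ r := rfl
          omega
        exact IH (G.dist p z₁) (by omega) p a z₁ q hpa (adjTo_of_mem_fst hG hzk) hpq (by omega)
          le_rfl

lemma crosses_comm {e f : V × V} (he : G.Adj e.1 e.2) (hf : G.Adj f.1 f.2) :
    Crosses G e f ↔ Crosses G f e := by
  rw [← theta_iff_crosses hG he hf, ← theta_iff_crosses hG hf he]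
  unfold Theta
  have c1 : G.dist e.1 f.1 = G.dist f.1 e.1 := SimpleGraph.dist_comm
  have c2 : G.dist e.2 f.2 = G.dist f.2 e.2 := SimpleGraph.dist_comm
  have c3 : G.dist e.1 f.2 = G.dist f.2 e.1 := SimpleGraph.dist_comm
  have c4 : G.dist e.2 f.1 = G.dist f.1 e.2 := SimpleGraph.dist_comm
  omega

lemma side_fst {a b : V} (hab : G.Adj a b) : Side G (a, b) a := by
  show G.dist a a < G.dist a b
  have e1 : G.dist a a = 0 := by simp
  have e2 : G.dist a b = 1 := dist_eq_one_iff_adj.mpr hab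
  omega

lemma side_snd_not {a b : V} (hab : G.Adj a b) : ¬ Side G (a, b) b := by
  show ¬ (G.dist b a < G.dist b b)
  have e1 : G.dist b b = 0 := by simp
  omega

lemma sep_self {a b : V} (hab : G.Adj a b) : ¬ (Side G (a, b) a ↔ Side G (a, b) b) := by
  have h1 := side_fst hG hab
  have h2 := side_snd_not hG hab
  tauto

/-- Completing a square across a hyperplane. -/
lemma square_complete {k : Set (V × V)} (hk : IsHyperplane G k) {p q a b : V}
    (hpq : G.Adj p q) (hpa : (p, a) ∈ k) (hqb : (q, b) ∈ k) (hpqk : (p, q) ∉ k) :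
    G.Adj a b ∧ ∀ x, Side G (p, q) x ↔ Side G (a, b) x := by
  have hpadj : G.Adj p a := hyp_adj hG hk hpa
  have hqadj : G.Adj q b := hyp_adj hG hk hqb
  have hSp : Side G (p, a) p := side_fst hG hpadj
  have hSa : ¬ Side G (p, a) a := side_snd_not hG hpadj
  have hSq : Side G (p, a) q := by
    have : ¬ Crosses G (p, a) (p, q) := by
      intro hcr
      exact hpqk ((hyp_char hG hk hpa (p, q)).mpr ⟨hpq, hcr⟩)
    unfold Crosses at this
    simp only [not_not] at this
    exact this.mp hSp
  have hSb : ¬ Side G (p, a) b := by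
    have := hyp_mem_crosses hG hk hpa hqb
    unfold Crosses at this
    simp only at this
    tauto
  have haq : a ≠ q := fun hctr => hSa (hctr ▸ hSq)
  have hbp : b ≠ p := by
    intro hctr
    rw [hctr] at hSb
    exact hSb hSp
  have dap : G.dist a p = 1 := dist_eq_one_iff_adj.mpr hpadj.symm
  have dbq : G.dist b q = 1 := dist_eq_one_iff_adj.mpr hqadj.symm
  have daq : G.dist a q = 2 := by
    have hK := adj_dist_cases hG hpq a
    have h0 : G.dist a q ≠ 0 := fun hctr => haq ((hG.1.dist_eq_zero_iff).mp hctr)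
    omega
  have dbp : G.dist b p = 2 := by
    have hK := adj_dist_cases hG hpq b
    have h0 : G.dist b p ≠ 0 := fun hctr => hbp ((hG.1.dist_eq_zero_iff).mp hctr)
    omega
  have hth := hyp_mem_theta hG hk hpa hqb
  unfold Theta at hth
  simp only at hth
  -- hth : d p q + d a b ≠ d p b + d a q
  have dpq : G.dist p q = 1 := dist_eq_one_iff_adj.mpr hpq
  have dpb : G.dist p b = 2 := by rwa [SimpleGraph.dist_comm] at dbp
  obtain ⟨m, ⟨hm1, hm2, hm3⟩, -⟩ := hG.2 a b p
  rw [dap] at hm2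
  rw [dbp] at hm3
  have hm : m = a ∨ m = p := by
    have : G.dist a m = 0 ∨ G.dist m p = 0 := by omega
    rcases this with h0 | h0
    · left; exact ((hG.1.dist_eq_zero_iff).mp h0).symm
    · right; exact (hG.1.dist_eq_zero_iff).mp h0
  have hab : G.Adj a b := by
    rcases hm with hma | hmp
    · -- m = a : d b a = 1
      rw [hma] at hm3
      have : G.dist b a = 1 := by omega
      exact (dist_eq_one_iff_adj.mp this).symm
    · -- m = p : d a b = 3, contradiction with Theta
      exfalso
      rw [hmp] at hm1 hm2
      have e1 : G.dist p p = 0 := by simp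
      have e2 : G.dist p b = G.dist b p := SimpleGraph.dist_comm
      have e4 : G.dist a p = G.dist p a := SimpleGraph.dist_comm
      omega
  refine ⟨hab, ?_⟩
  intro x
  exact square_side hG hpq hqadj hab.symm hpadj.symm hbp.symm haq.symm x

/-- Carrier convexity. -/
lemma carrier_conv {k : Set (V × V)} (hk : IsHyperplane G k) :
    ∀ D : ℕ, ∀ p r x : V, AdjTo G k p → AdjTo G k r →
    G.dist p x + G.dist x r = G.dist p r → G.dist p x ≤ D → AdjTo G k x := by
  intro D
  induction D with
  | zero =>
    intro p r x hp hr hd hD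
    have : p = x := (hG.1.dist_eq_zero_iff).mp (by omega)
    rwa [← this]
  | succ D IH =>
    intro p r x hp hr hd hD
    by_cases h0 : G.dist p x = 0
    · have : p = x := (hG.1.dist_eq_zero_iff).mp h0
      rwa [← this]
    · obtain ⟨q, hpq, hq⟩ := exists_step hG h0
      have hqr : G.dist q r + 1 = G.dist p r := by
        have t1 : G.dist p r ≤ G.dist p q + G.dist q r := hG.1.dist_triangle
        have t2 : G.dist q r ≤ G.dist q x + G.dist x r := hG.1.dist_triangle
        have e1 : G.dist p q = 1 := dist_eq_one_iff_adj.mpr hpq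
        omega
      obtain ⟨a, hpa⟩ := (adjTo_iff hG hk p).mp hp
      obtain ⟨b, hqb⟩ := carrier_step hG hk (G.dist p r) p a r q hpa hr hpq hqr le_rfl
      exact IH q r x (adjTo_of_mem_fst hG hqb) hr (by omega) (by omega)

lemma transverse_symm {h k : Set (V × V)} (ht : Transverse G h k) : Transverse G k h := by
  obtain ⟨a, b, c, d, m1, m2, m3, m4, a1, a2, a3, a4⟩ := ht
  exact ⟨a, c, b, d, m3, m4, m1, m2, a3, a4, a1, a2⟩

/-- Lemma X : a hyperplane separating two points of the carrier of `k` is transverse to `k`. -/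
lemma transverse_of_sep {h k : Set (V × V)} (hh : IsHyperplane G h) (hk : IsHyperplane G k)
    (hne : h ≠ k) :
    ∀ D : ℕ, ∀ (f : V × V) (p r : V), f ∈ h → AdjTo G k p → AdjTo G k r →
    ¬ (Side G f p ↔ Side G f r) → G.dist p r ≤ D → Transverse G h k := by
  intro D
  induction D using Nat.strong_induction_on with
  | _ D IH =>
  intro f p r hf hp hr hsep hD
  have hfadj : G.Adj f.1 f.2 := hyp_adj hG hh hf
  have hn0 : G.dist p r ≠ 0 := by
    intro h0
    have : p = r := (hG.1.dist_eq_zero_iff).mp h0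
    rw [this] at hsep
    exact hsep Iff.rfl
  rcases Nat.lt_or_ge (G.dist p r) 2 with hsmall | hbig
  · -- base case : p and r adjacent
    have hpr : G.Adj p r := dist_eq_one_iff_adj.mp (by omega)
    have hprh : (p, r) ∈ h := by
      rw [hyp_char hG hh hf]
      exact ⟨hpr, hsep⟩
    have hprk : (p, r) ∉ k := by
      intro hin
      exact hne (hyp_eq_of_mem hG hh hk hprh hin)
    obtain ⟨a, hpa⟩ := (adjTo_iff hG hk p).mp hp
    obtain ⟨c, hrc⟩ := (adjTo_iff hG hk r).mp hr
    obtain ⟨hac, hside⟩ := square_complete hG hk hpr hpa hrc hprk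
    have hach : (a, c) ∈ h := by
      rw [hyp_char hG hh hprh]
      refine ⟨hac, ?_⟩
      exact (crosses_congr hG (Or.inl hside) (a, c)).mpr (crosses_self hG (e := (a, c)) hac)
    exact ⟨p, r, a, c, hprh, hach, hpa, hrc, hpr, hac, hyp_adj hG hk hpa, hyp_adj hG hk hrc⟩
  · -- step
    obtain ⟨q, hpq, hq⟩ := exists_step hG hn0
    obtain ⟨a, hpa⟩ := (adjTo_iff hG hk p).mp hp
    obtain ⟨b, hqb⟩ := carrier_step hG hk (G.dist p r) p a r q hpa hr hpq hq le_rfl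
    have hkq : AdjTo G k q := adjTo_of_mem_fst hG hqb
    by_cases hqp : Side G f q ↔ Side G f p
    · exact IH (G.dist q r) (by omega) f q r hf hkq hr (by tauto) le_rfl
    · have hd1 : G.dist p q = 1 := dist_eq_one_iff_adj.mpr hpq
      exact IH 1 (by omega) f p q hf hp hkq (by tauto) (by omega)

/-- If `𝒲(v) ⊆ 𝒲(x)` and `v ≠ x`, the link of `v` is a cone. -/
lemma linkcone_of_subset {v x : V} (hvx : v ≠ x) (hsub : Wv G v ⊆ Wv G x) :
    LinkIsCone G v := by
  have hd0 : G.dist v x ≠ 0 := fun h0 => hvx ((hG.1.dist_eq_zero_iff).mp h0)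
  obtain ⟨q, hvq, hq⟩ := exists_step hG hd0
  refine ⟨{f | G.Adj f.1 f.2 ∧ Theta G (v, q) f}, ⟨edge_hyp hG hvq, adjTo_of_mem_fst hG (hyp_self_mem hG hvq)⟩, ?_⟩
  intro k hk hkne
  have hkx : k ∈ Wv G x := hsub hk
  have hSx : ¬ Side G (v, q) x := by
    show ¬ (G.dist x v < G.dist x q)
    have e1 : G.dist q x = G.dist x q := SimpleGraph.dist_comm
    have e2 : G.dist v x = G.dist x v := SimpleGraph.dist_comm
    omega
  exact transverse_of_sep hG (edge_hyp hG hvq) hk.1 hkne.symm (G.dist v x) (v, q) v x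
    (hyp_self_mem hG hvq) hk.2 hkx.2
    (by have := side_fst hG hvq; tauto) le_rfl

lemma wv_inj (hext : ∀ v : V, ¬ LinkIsCone G v) {v x : V} (hsub : Wv G v ⊆ Wv G x) :
    v = x := by
  by_contra hne
  exact hext v (linkcone_of_subset hG hne hsub)

lemma wv_inter_subset_middle {v w x : V} (hd : G.dist v x + G.dist x w = G.dist v w) :
    Wv G v ∩ Wv G w ⊆ Wv G x := by
  rintro k ⟨⟨hk, hv⟩, ⟨-, hw⟩⟩
  exact ⟨hk, carrier_conv hG hk (G.dist v x) v w x hv hw hd le_rfl⟩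

/-- Key lemma using `NoHypExtremalVertex` : if `x` is adjacent to every hyperplane meeting
both `v` and `w` (with `v ~ w`), then `x ∈ {v, w}`. -/
lemma adj_char_aux (hnoext : NoHypExtremalVertex G) {v w x : V} (hadj : G.Adj v w)
    (hsub : Wv G v ∩ Wv G w ⊆ Wv G x) (hxv : x ≠ v)
    (hdxw : G.dist x w = G.dist x v + 1) : False := by
  set h : Set (V × V) := {f | G.Adj f.1 f.2 ∧ Theta G (v, w) f} with hdef
  have hh : IsHyperplane G h := edge_hyp hG hadj
  have hvw : (v, w) ∈ h := hyp_self_mem hG hadj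
  have hd0 : G.dist v x ≠ 0 := by
    intro h0
    exact hxv ((hG.1.dist_eq_zero_iff).mp h0).symm
  obtain ⟨z, hvz, hz⟩ := exists_step hG hd0
  have hdvz : G.dist v z = 1 := dist_eq_one_iff_adj.mpr hvz
  -- all common hyperplanes reach z
  have hmid : ∀ u ∈ Wv G v ∩ Wv G w, AdjTo G u z := by
    rintro u hu
    have hux : AdjTo G u x := (hsub hu).2
    have huv : AdjTo G u v := hu.1.2
    exact carrier_conv hG hu.1.1 (G.dist v z) v x z huv hux (by omega) le_rfl
  have hhz : AdjTo G h z :=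
    hmid h ⟨⟨hh, adjTo_of_mem_fst hG hvw⟩, ⟨hh, adjTo_of_mem_snd hG hvw⟩⟩
  obtain ⟨y, hzy⟩ := (adjTo_iff hG hh z).mp hhz
  have hzadj : G.Adj z y := hyp_adj hG hh hzy
  -- z is on the v-side of h
  have hdzw : G.dist z w = 2 := by
    have hK := adj_dist_cases hG hadj z
    have hzw : z ≠ w := by
      intro hctr
      rw [hctr] at hz
      have e1 : G.dist w x = G.dist x w := SimpleGraph.dist_comm
      have e2 : G.dist v x = G.dist x v := SimpleGraph.dist_comm
      omega
    have h0 : G.dist z w ≠ 0 := fun hctr => hzw ((hG.1.dist_eq_zero_iff).mp hctr)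
    have e3 : G.dist z v = 1 := by rwa [SimpleGraph.dist_comm] at hdvz
    omega
  have hvznoth : (v, z) ∉ h := by
    intro hin
    have := hyp_mem_crosses hG hh hvw hin
    unfold Crosses Side at this
    simp only at this
    have e1 : G.dist v v = 0 := by simp
    have e2 : G.dist v w = 1 := dist_eq_one_iff_adj.mpr hadj
    have e3 : G.dist z v = 1 := by rwa [SimpleGraph.dist_comm] at hdvz
    omega
  obtain ⟨hwy, hside⟩ := square_complete hG hh hvz hvw hzy hvznoth
  -- the hyperplane through (v,z)
  set k₀ : Set (V × V) := {f | G.Adj f.1 f.2 ∧ Theta G (v, z) f} with hk₀def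
  have hk₀ : IsHyperplane G k₀ := edge_hyp hG hvz
  have hvzk : (v, z) ∈ k₀ := hyp_self_mem hG hvz
  have hwyk : (w, y) ∈ k₀ := by
    rw [hyp_char hG hk₀ hvzk]
    exact ⟨hwy, (crosses_congr hG (Or.inl hside) (w, y)).mpr (crosses_self hG (e := (w, y)) hwy)⟩
  have hk₀h : k₀ ≠ h := by
    intro hctr
    rw [hctr] at hvzk
    exact hvznoth hvzk
  refine hnoext h hh (v, w) hvw ⟨k₀, hk₀, hk₀h, ⟨z, y, hvzk, hwyk, hzadj⟩, ?_⟩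
  intro u' hu' hu'h hAdjE hu'k₀
  obtain ⟨c, d, hvc, hwd, hcd⟩ := hAdjE
  have hu'mem : u' ∈ Wv G v ∩ Wv G w :=
    ⟨⟨hu', adjTo_of_mem_fst hG hvc⟩, ⟨hu', adjTo_of_mem_fst hG hwd⟩⟩
  have hu'z : AdjTo G u' z := hmid u' hu'mem
  exact transverse_of_sep hG hk₀ hu' (Ne.symm hu'k₀) (G.dist v z) (v, z) v z hvzk
    (adjTo_of_mem_fst hG hvc) hu'z (sep_self hG hvz) le_rfl

lemma adj_char (hnoext : NoHypExtremalVertex G) {v w x : V} (hadj : G.Adj v w)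
    (hsub : Wv G v ∩ Wv G w ⊆ Wv G x) : x = v ∨ x = w := by
  by_contra hctr
  push_neg at hctr
  obtain ⟨hxv, hxw⟩ := hctr
  obtain ⟨m, ⟨hm1, hm2, hm3⟩, -⟩ := hG.2 x v w
  have hd1 : G.dist v w = 1 := dist_eq_one_iff_adj.mpr hadj
  rw [hd1] at hm3
  have hm : m = v ∨ m = w := by
    have : G.dist v m = 0 ∨ G.dist m w = 0 := by omega
    rcases this with h0 | h0
    · left; exact ((hG.1.dist_eq_zero_iff).mp h0).symm
    · right; exact (hG.1.dist_eq_zero_iff).mp h0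
  rcases hm with hmv | hmw
  · rw [hmv] at hm1 hm2
    exact adj_char_aux hG hnoext hadj hsub hxv (by omega)
  · rw [hmw] at hm1 hm2
    have hsub' : Wv G w ∩ Wv G v ⊆ Wv G x := by
      rw [Set.inter_comm]; exact hsub
    have e1 : G.dist w v = 1 := by rwa [SimpleGraph.dist_comm] at hd1
    exact adj_char_aux hG hnoext hadj.symm hsub' hxw (by omega)

/-- Hyperplanes with the same carrier are equal (uses `NoHypExtremalVertex`). -/
lemma hyp_eq_of_carrier (hnoext : NoHypExtremalVertex G) {u₁ u₂ : Set (V × V)}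
    (h1 : IsHyperplane G u₁) (h2 : IsHyperplane G u₂)
    (hcar : ∀ t : V, AdjTo G u₁ t ↔ AdjTo G u₂ t) : u₁ = u₂ := by
  by_contra hne
  have h1c := h1
  obtain ⟨e, headj, hedef⟩ := h1c
  have hmem : e ∈ u₁ := by rw [hedef]; exact hyp_self_mem hG headj
  obtain ⟨p, q⟩ := e
  have hpq : G.Adj p q := headj
  have hu2p : AdjTo G u₂ p := (hcar p).mp (adjTo_of_mem_fst hG hmem)
  have hu2q : AdjTo G u₂ q := (hcar q).mp (adjTo_of_mem_snd hG hmem)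
  obtain ⟨a, hpa⟩ := (adjTo_iff hG h2 p).mp hu2p
  obtain ⟨b, hqb⟩ := (adjTo_iff hG h2 q).mp hu2q
  have hpqk : (p, q) ∉ u₂ := by
    intro hin
    exact hne (hyp_eq_of_mem hG h1 h2 hmem hin)
  obtain ⟨hab, hside⟩ := square_complete hG h2 hpq hpa hqb hpqk
  refine hnoext u₁ h1 (p, q) hmem ⟨u₂, h2, Ne.symm hne, ⟨a, b, hpa, hqb, hab⟩, ?_⟩
  intro u' hu' hu'1 hAdjE hu'2
  obtain ⟨c, d, hpc, hqd, hcd⟩ := hAdjE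
  have hpqu' : (p, q) ∉ u' := by
    intro hin
    exact hu'1 (hyp_eq_of_mem hG hu' h1 hin hmem)
  obtain ⟨hcd', hside'⟩ := square_complete hG hu' hpq hpc hqd hpqu'
  have hcdu1 : (c, d) ∈ u₁ := by
    rw [hyp_char hG h1 hmem]
    exact ⟨hcd, (crosses_congr hG (Or.inl hside') (c, d)).mpr (crosses_self hG (e := (c, d)) hcd)⟩
  have hu2c : AdjTo G u₂ c := (hcar c).mp (adjTo_of_mem_fst hG hcdu1)
  have htr := transverse_of_sep hG hu' h2 hu'2 (G.dist p c) (p, c) p c hpc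
    (adjTo_of_mem_fst hG hpa) hu2c (sep_self hG (hyp_adj hG hu' hpc)) le_rfl
  exact transverse_symm hG htr

/-! ### Transport along automorphisms -/

lemma iso_dist (φ : G ≃g G) (u v : V) : G.dist (φ u) (φ v) = G.dist u v := by
  have hle : ∀ (ψ : G ≃g G) (a b : V), G.dist (ψ a) (ψ b) ≤ G.dist a b := by
    intro ψ a b
    obtain ⟨p, hp⟩ := hG.1.exists_walk_length_eq_dist a b
    calc G.dist (ψ a) (ψ b) ≤ (p.map ψ.toHom).length := dist_le _
      _ = p.length := Walk.length_map _ _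
      _ = G.dist a b := hp
  refine le_antisymm (hle φ u v) ?_
  have := hle φ.symm (φ u) (φ v)
  simpa using this

lemma theta_map (φ : G ≃g G) (e f : V × V) :
    Theta G (φ e.1, φ e.2) (φ f.1, φ f.2) ↔ Theta G e f := by
  unfold Theta
  simp only
  rw [iso_dist hG φ e.1 f.1, iso_dist hG φ e.2 f.2, iso_dist hG φ e.1 f.2,
    iso_dist hG φ e.2 f.1]

lemma hmap_mem (φ : G ≃g G) (h : Set (V × V)) (f : V × V) :
    (φ f.1, φ f.2) ∈ hmap G φ h ↔ f ∈ h := by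
  constructor
  · rintro ⟨g, hg, hgeq⟩
    have h1 : g.1 = f.1 := φ.injective (congrArg Prod.fst hgeq)
    have h2 : g.2 = f.2 := φ.injective (congrArg Prod.snd hgeq)
    have : g = f := Prod.ext h1 h2
    rwa [← this]
  · intro hf
    exact ⟨f, hf, rfl⟩

lemma hmap_mem' (φ : G ≃g G) (h : Set (V × V)) (g : V × V) :
    g ∈ hmap G φ h ↔ (φ.symm g.1, φ.symm g.2) ∈ h := by
  have := hmap_mem hG φ h (φ.symm g.1, φ.symm g.2)
  simp only [RelIso.apply_symm_apply] at this
  rw [← this]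

lemma hmap_comp (φ : G ≃g G) (h : Set (V × V)) :
    hmap G φ (hmap G φ.symm h) = h := by
  ext g
  rw [hmap_mem' hG φ]
  exact hmap_mem hG φ.symm h g

lemma hmap_hyp (φ : G ≃g G) {h : Set (V × V)} (hh : IsHyperplane G h) :
    IsHyperplane G (hmap G φ h) := by
  obtain ⟨e, he, rfl⟩ := hh
  refine ⟨(φ e.1, φ e.2), by simpa using φ.map_adj_iff.mpr he, ?_⟩
  ext g
  rw [hmap_mem' hG φ]
  simp only [Set.mem_setOf_eq]
  constructor
  · rintro ⟨hadj, hth⟩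
    constructor
    · have := φ.map_adj_iff.mpr hadj
      simpa using this
    · have := (theta_map hG φ e (φ.symm g.1, φ.symm g.2)).mpr hth
      simpa using this
  · rintro ⟨hadj, hth⟩
    constructor
    · exact φ.symm.map_adj_iff.mpr hadj
    · rw [← theta_map hG φ e (φ.symm g.1, φ.symm g.2)]
      simpa using hth

lemma hmap_adjTo (φ : G ≃g G) (h : Set (V × V)) (v : V) :
    AdjTo G (hmap G φ h) (φ v) ↔ AdjTo G h v := by
  constructor
  · rintro ⟨e, he, hor⟩
    obtain ⟨f, hf, rfl⟩ := he
    refine ⟨f, hf, ?_⟩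
    rcases hor with h1 | h1
    · exact Or.inl (φ.injective h1)
    · exact Or.inr (φ.injective h1)
  · rintro ⟨e, he, hor⟩
    refine ⟨(φ e.1, φ e.2), (hmap_mem hG φ h e).mpr he, ?_⟩
    rcases hor with h1 | h1
    · exact Or.inl (congrArg φ h1)
    · exact Or.inr (congrArg φ h1)

lemma hmap_wv (φ : G ≃g G) {h : Set (V × V)} (hh : IsHyperplane G h) (v : V) :
    hmap G φ h ∈ Wv G (φ v) ↔ h ∈ Wv G v := by
  constructor
  · rintro ⟨-, hadj⟩
    exact ⟨hh, (hmap_adjTo hG φ h v).mp hadj⟩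
  · rintro ⟨-, hadj⟩
    exact ⟨hmap_hyp hG φ hh, (hmap_adjTo hG φ h v).mpr hadj⟩

/-- Bullet 1 : injectivity of ι. -/
lemma iota_injective (hext : ∀ v : V, ¬ LinkIsCone G v) (φ ψ : G ≃g G)
    (hagree : ∀ h, IsHyperplane G h → hmap G φ h = hmap G ψ h) : φ = ψ := by
  ext v
  refine wv_inj hG hext (v := φ v) (x := ψ v) ?_
  intro k hk
  have hk' : IsHyperplane G (hmap G φ.symm k) := hmap_hyp hG φ.symm hk.1
  have hcomp : hmap G φ (hmap G φ.symm k) = k := hmap_comp hG φ k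
  have h1 : hmap G φ.symm k ∈ Wv G v := by
    rw [← hmap_wv hG φ hk' v, hcomp]
    exact hk
  have h2 := (hmap_wv hG ψ hk' v).mpr h1
  rw [← hagree _ hk', hcomp] at h2
  exact h2

/-! ### From the combinatorial characterisation to adjacency -/

lemma adj_of_char₂ {v w : V} (hvw : v ≠ w)
    (hchar : ∀ x, Wv G v ∩ Wv G w ⊆ Wv G x → x = v ∨ x = w) : G.Adj v w := by
  have hd0 : G.dist v w ≠ 0 := fun h0 => hvw ((hG.1.dist_eq_zero_iff).mp h0)
  rcases Nat.lt_or_ge (G.dist v w) 2 with hsmall | hbig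
  · exact dist_eq_one_iff_adj.mp (by omega)
  · exfalso
    obtain ⟨x, hvx, hx⟩ := exists_step hG hd0
    have hdvx : G.dist v x = 1 := dist_eq_one_iff_adj.mpr hvx
    have hmid : G.dist v x + G.dist x w = G.dist v w := by omega
    rcases hchar x (wv_inter_subset_middle hG hmid) with h1 | h1
    · exact hvx.ne h1.symm
    · rw [h1] at hx
      have : G.dist w w = 0 := by simp
      omega

lemma induces_symm (ψ : contactGraph G ≃g contactGraph G) (π : Equiv.Perm V)
    (hind : InducesPerm G ψ π) : InducesPerm G ψ.symm π.symm := by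
  intro v h
  have := hind (π.symm v) (ψ.symm h)
  simp only [RelIso.apply_symm_apply, Equiv.apply_symm_apply] at this
  exact this.symm

lemma induces_adj (hnoext : NoHypExtremalVertex G) (ψ : contactGraph G ≃g contactGraph G)
    (π : Equiv.Perm V) (hind : InducesPerm G ψ π) {v w : V} (hadj : G.Adj v w) :
    G.Adj (π v) (π w) := by
  refine adj_of_char₂ hG (fun heq => hadj.ne (π.injective heq)) ?_
  intro x' hsub'
  have hsub : Wv G v ∩ Wv G w ⊆ Wv G (π.symm x') := by
    rintro u ⟨huv, huw⟩
    have hu : IsHyperplane G u := huv.1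
    have h1 : ((ψ ⟨u, hu⟩ : Hyp G)).1 ∈ Wv G (π v) := (hind v ⟨u, hu⟩).mp huv
    have h2 : ((ψ ⟨u, hu⟩ : Hyp G)).1 ∈ Wv G (π w) := (hind w ⟨u, hu⟩).mp huw
    have h3 := hsub' ⟨h1, h2⟩
    have h4 := hind (π.symm x') ⟨u, hu⟩
    rw [Equiv.apply_symm_apply] at h4
    exact h4.mpr h3
  rcases adj_char hG hnoext hadj hsub with h1 | h1
  · left; rw [← h1, Equiv.apply_symm_apply]
  · right; rw [← h1, Equiv.apply_symm_apply]

/-- Bullet 3 : a vertex permutation induced by a contact-graph automorphism is realised by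
a cubical automorphism. -/
lemma induces_phi (hnoext : NoHypExtremalVertex G) (ψ : contactGraph G ≃g contactGraph G)
    (π : Equiv.Perm V) (hind : InducesPerm G ψ π) :
    ∃ φ : G ≃g G, (∀ v : V, φ v = π v) ∧ ∀ h : Hyp G, (ψ h).1 = hmap G φ h.1 := by
  have hsymm := induces_symm hG ψ π hind
  have hback : ∀ {v w : V}, G.Adj (π v) (π w) → G.Adj v w := by
    intro v w h
    have := induces_adj hG hnoext ψ.symm π.symm hsymm h
    simpa using this
  refine ⟨RelIso.mk π (by
    intro a b
    exact ⟨fun h => hback h, fun h => induces_adj hG hnoext ψ π hind h⟩), fun v => rfl, ?_⟩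
  set φ : G ≃g G := RelIso.mk π (by
    intro a b
    exact ⟨fun h => hback h, fun h => induces_adj hG hnoext ψ π hind h⟩) with hφdef
  show ∀ h : Hyp G, (ψ h).1 = hmap G φ h.1
  intro h
  apply hyp_eq_of_carrier hG hnoext (ψ h).2 (hmap_hyp hG φ h.2)
  intro t
  have hφt : φ (π.symm t) = t := Equiv.apply_symm_apply π t
  constructor
  · intro hat
    have h1 : (ψ h).1 ∈ Wv G t := ⟨(ψ h).2, hat⟩
    have h2 : h.1 ∈ Wv G (π.symm t) := by
      have h5 := hind (π.symm t) h
      rw [Equiv.apply_symm_apply] at h5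
      exact h5.mpr h1
    have h3 : hmap G φ h.1 ∈ Wv G (φ (π.symm t)) := (hmap_wv hG φ h.2 _).mpr h2
    rw [hφt] at h3
    exact h3.2
  · intro hat
    have h3 : hmap G φ h.1 ∈ Wv G t := ⟨hmap_hyp hG φ h.2, hat⟩
    have h4 : hmap G φ h.1 ∈ Wv G (φ (π.symm t)) := by rw [hφt]; exact h3
    have h2 : h.1 ∈ Wv G (π.symm t) := (hmap_wv hG φ h.2 _).mp h4
    have h5 := (hind (π.symm t) h).mp h2
    rw [Equiv.apply_symm_apply] at h5
    exact h5.2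

end basic

/-! ### Helly property and cliques -/

def ConvSet (G : SimpleGraph V) (S : Set V) : Prop :=
  ∀ p r x : V, p ∈ S → r ∈ S → G.dist p x + G.dist x r = G.dist p r → x ∈ S

def ICimg (G : SimpleGraph V) (ψ : contactGraph G ≃g contactGraph G) (v : V) :
    Set (Set (V × V)) :=
  {u | ∃ k : Hyp G, k.1 ∈ Wv G v ∧ (ψ k).1 = u}

section cliques
variable (hG : IsMedianGraph G)
include hG

lemma conv_inter3 {S T U : Set V} (hS : ConvSet G S) (hT : ConvSet G T) (hU : ConvSet G U)
    (hTU : (T ∩ U).Nonempty) (hSU : (S ∩ U).Nonempty) (hST : (S ∩ T).Nonempty) :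
    ∃ m, m ∈ S ∧ m ∈ T ∧ m ∈ U := by
  obtain ⟨a, haT, haU⟩ := hTU
  obtain ⟨b, hbS, hbU⟩ := hSU
  obtain ⟨c, hcS, hcT⟩ := hST
  obtain ⟨m, ⟨h1, h2, h3⟩, -⟩ := hG.2 a b c
  exact ⟨m, hS b c m hbS hcS h3, hT a c m haT hcT h2, hU a b m haU hbU h1⟩

lemma helly_list : ∀ n : ℕ, ∀ L : List (Set V), L.length ≤ n →
    (∀ S ∈ L, ConvSet G S) → (∀ S ∈ L, ∀ T ∈ L, (S ∩ T).Nonempty) → L ≠ [] →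
    ∃ x, ∀ S ∈ L, x ∈ S := by
  intro n
  induction n with
  | zero =>
    intro L hlen _ _ hne
    cases L with
    | nil => exact absurd rfl hne
    | cons S L' => simp at hlen
  | succ n IH =>
    intro L hlen hconv hpair hne
    cases L with
    | nil => exact absurd rfl hne
    | cons S L' =>
      by_cases hL' : L' = []
      · subst hL'
        obtain ⟨x, hx, -⟩ := hpair S (by simp) S (by simp)
        refine ⟨x, ?_⟩
        intro T hT
        simp only [List.mem_cons, List.not_mem_nil, or_false] at hT
        rwa [hT]
      · set L'' := L'.map (· ∩ S) with hL''def
        have hmem : ∀ X ∈ L'', ∃ T ∈ L', X = T ∩ S := by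
          intro X hX
          obtain ⟨T, hT, rfl⟩ := List.mem_map.mp hX
          exact ⟨T, hT, rfl⟩
        have hconv'' : ∀ X ∈ L'', ConvSet G X := by
          intro X hX
          obtain ⟨T, hT, rfl⟩ := hmem X hX
          intro p r x hp hr hd
          exact ⟨hconv T (by simp [hT]) p r x hp.1 hr.1 hd,
            hconv S (by simp) p r x hp.2 hr.2 hd⟩
        have hpair'' : ∀ X ∈ L'', ∀ Y ∈ L'', (X ∩ Y).Nonempty := by
          intro X hX Y hY
          obtain ⟨T, hT, rfl⟩ := hmem X hX
          obtain ⟨T', hT', rfl⟩ := hmem Y hY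
          obtain ⟨m, hm1, hm2, hm3⟩ := conv_inter3 hG
            (hconv T (by simp [hT])) (hconv T' (by simp [hT'])) (hconv S (by simp))
            (hpair T' (by simp [hT']) S (by simp))
            (hpair T (by simp [hT]) S (by simp))
            (hpair T (by simp [hT]) T' (by simp [hT']))
          exact ⟨m, ⟨hm1, hm3⟩, ⟨hm2, hm3⟩⟩
        have hlen'' : L''.length ≤ n := by
          simp only [hL''def, List.length_map]
          have := hlen
          simp only [List.length_cons] at this
          omega
        have hne'' : L'' ≠ [] := by
          simp only [hL''def, ne_eq, List.map_eq_nil_iff]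
          exact hL'
        obtain ⟨x, hx⟩ := IH L'' hlen'' hconv'' hpair'' hne''
        refine ⟨x, ?_⟩
        intro T hT
        rcases List.mem_cons.mp hT with rfl | hT'
        · obtain ⟨T0, hT0⟩ := List.exists_mem_of_ne_nil L' hL'
          have := hx (T0 ∩ T) (List.mem_map.mpr ⟨T0, hT0, rfl⟩)
          exact this.2
        · have := hx (T ∩ S) (List.mem_map.mpr ⟨T, hT', rfl⟩)
          exact this.1

lemma carrier_convSet {k : Set (V × V)} (hk : IsHyperplane G k) :
    ConvSet G {t | AdjTo G k t} := by
  intro p r x hp hr hd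
  exact carrier_conv hG hk (G.dist p x) p r x hp hr hd le_rfl

lemma carrier_nonempty {k : Set (V × V)} (hk : IsHyperplane G k) :
    {t | AdjTo G k t}.Nonempty := by
  obtain ⟨e, he, rfl⟩ := hk
  exact ⟨e.1, adjTo_of_mem_fst hG (hyp_self_mem hG he)⟩

lemma clique_common {C : Set (Set (V × V))} (hC : IsContactClique G C) (hfin : C.Finite)
    (hne : C.Nonempty) : ∃ x, ∀ h ∈ C, AdjTo G h x := by
  classical
  set L : List (Set V) := hfin.toFinset.toList.map (fun h => {t | AdjTo G h t}) with hLdef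
  have hLmem : ∀ X ∈ L, ∃ h ∈ C, X = {t | AdjTo G h t} := by
    intro X hX
    obtain ⟨h, hh, rfl⟩ := List.mem_map.mp hX
    exact ⟨h, by simpa using (Set.Finite.mem_toFinset hfin).mp (Finset.mem_toList.mp hh), rfl⟩
  have hconv : ∀ X ∈ L, ConvSet G X := by
    intro X hX
    obtain ⟨h, hh, rfl⟩ := hLmem X hX
    exact carrier_convSet hG (hC.1 h hh)
  have hpair : ∀ X ∈ L, ∀ Y ∈ L, (X ∩ Y).Nonempty := by
    intro X hX Y hY
    obtain ⟨h, hh, rfl⟩ := hLmem X hX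
    obtain ⟨h', hh', rfl⟩ := hLmem Y hY
    by_cases heq : h = h'
    · subst heq
      obtain ⟨t, ht⟩ := carrier_nonempty hG (hC.1 h hh)
      exact ⟨t, ht, ht⟩
    · obtain ⟨t, ht, ht'⟩ := hC.2 h hh h' hh' heq
      exact ⟨t, ht, ht'⟩
  have hLne : L ≠ [] := by
    simp only [hLdef, ne_eq, List.map_eq_nil_iff, Finset.toList_eq_nil,
      Set.Finite.toFinset_eq_empty]
    exact hne.ne_empty
  obtain ⟨x, hx⟩ := helly_list hG L.length L le_rfl hconv hpair hLne
  refine ⟨x, ?_⟩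
  intro h hh
  exact hx {t | AdjTo G h t}
    (List.mem_map.mpr ⟨h, Finset.mem_toList.mpr ((Set.Finite.mem_toFinset hfin).mpr hh), rfl⟩)

lemma wv_finite_card {N : ℕ} (hN : ∀ v : V, (G.neighborSet v).Finite ∧ (G.neighborSet v).ncard ≤ N)
    (v : V) : (Wv G v).Finite ∧ (Wv G v).ncard ≤ N := by
  classical
  set f : Set (V × V) → V := fun u => if h : ∃ a, (v, a) ∈ u then h.choose else v with hfdef
  have hmaps : Set.MapsTo f (Wv G v) (G.neighborSet v) := by
    rintro u ⟨hu, hadj⟩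
    have hex : ∃ a, (v, a) ∈ u := (adjTo_iff hG hu v).mp hadj
    have : f u = hex.choose := dif_pos hex
    rw [SimpleGraph.mem_neighborSet, this]
    exact hyp_adj hG hu hex.choose_spec
  have hinj : Set.InjOn f (Wv G v) := by
    rintro u ⟨hu, hadjv⟩ u' ⟨hu', hadjv'⟩ heq
    have hex : ∃ a, (v, a) ∈ u := (adjTo_iff hG hu v).mp hadjv
    have hex' : ∃ a, (v, a) ∈ u' := (adjTo_iff hG hu' v).mp hadjv'
    have h1 : f u = hex.choose := dif_pos hex
    have h2 : f u' = hex'.choose := dif_pos hex'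
    have hmem : (v, hex.choose) ∈ u := hex.choose_spec
    have hmem' : (v, hex.choose) ∈ u' := by
      have : hex.choose = hex'.choose := by rw [← h1, ← h2, heq]
      rw [this]
      exact hex'.choose_spec
    exact hyp_eq_of_mem hG hu hu' hmem hmem'
  constructor
  · exact Set.Finite.of_finite_image ((hN v).1.subset hmaps.image_subset) hinj
  · exact le_trans (Set.ncard_le_ncard_of_injOn f hmaps hinj (hN v).1) (hN v).2

lemma clique_finite (hULF : UnifLocFinite G) {C : Set (Set (V × V))}
    (hC : IsContactClique G C) : C.Finite := by
  obtain ⟨N, hN⟩ := hULF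
  by_contra hinf
  obtain ⟨F, hFC, hFfin, hFcard⟩ := Set.Infinite.exists_subset_ncard_eq hinf (N + 1)
  have hFclique : IsContactClique G F :=
    ⟨fun h hh => hC.1 h (hFC hh), fun h hh h' hh' hne => hC.2 h (hFC hh) h' (hFC hh') hne⟩
  have hFne : F.Nonempty := by
    apply Set.nonempty_of_ncard_ne_zero
    omega
  obtain ⟨x, hx⟩ := clique_common hG hFclique hFfin hFne
  have hsub : F ⊆ Wv G x := fun h hh => ⟨hC.1 h (hFC hh), hx h hh⟩
  have h1 := Set.ncard_le_ncard hsub (wv_finite_card hG hN x).1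
  have h2 := (wv_finite_card hG hN x).2
  omega

lemma clique_sub_wv (hULF : UnifLocFinite G) {C : Set (Set (V × V))}
    (hC : IsContactClique G C) (hne : C.Nonempty) : ∃ x, C ⊆ Wv G x := by
  obtain ⟨x, hx⟩ := clique_common hG hC (clique_finite hG hULF hC) hne
  exact ⟨x, fun h hh => ⟨hC.1 h hh, hx h hh⟩⟩

lemma icimg_clique (ψ : contactGraph G ≃g contactGraph G) (v : V) :
    IsContactClique G (ICimg G ψ v) := by
  constructor
  · rintro u ⟨k, -, rfl⟩
    exact (ψ k).2
  · rintro u ⟨k, hk, rfl⟩ u' ⟨k', hk', rfl⟩ hne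
    have hkk : k ≠ k' := by rintro rfl; exact hne rfl
    have hadj : (contactGraph G).Adj k k' := ⟨hkk, v, hk.2, hk'.2⟩
    exact ((ψ.map_adj_iff).mpr hadj).2

lemma icimg_nonempty (hedge : ∀ t : V, ∃ w, G.Adj t w)
    (ψ : contactGraph G ≃g contactGraph G) (v : V) : (ICimg G ψ v).Nonempty := by
  obtain ⟨w, hw⟩ := hedge v
  exact ⟨_, ⟨⟨_, edge_hyp hG hw⟩,
    ⟨edge_hyp hG hw, adjTo_of_mem_fst hG (hyp_self_mem hG hw)⟩, rfl⟩⟩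

lemma icimg_eq_wv (hULF : UnifLocFinite G) (hext : ∀ v : V, ¬ LinkIsCone G v)
    (hedge : ∀ t : V, ∃ w, G.Adj t w) (ψ : contactGraph G ≃g contactGraph G) (v : V) :
    ∃ x, ICimg G ψ v = Wv G x := by
  obtain ⟨x, hx⟩ := clique_sub_wv hG hULF (icimg_clique hG ψ v) (icimg_nonempty hG hedge ψ v)
  refine ⟨x, Set.Subset.antisymm hx ?_⟩
  have hPC : Wv G v ⊆ ICimg G ψ.symm x := by
    rintro u hu
    refine ⟨ψ ⟨u, hu.1⟩, hx ⟨⟨u, hu.1⟩, hu, rfl⟩, ?_⟩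
    simp
  obtain ⟨y, hy⟩ := clique_sub_wv hG hULF (icimg_clique hG ψ.symm x)
    (icimg_nonempty hG hedge ψ.symm x)
  have hvy : v = y := wv_inj hG hext (hPC.trans hy)
  intro u' hu'
  have h1 : (ψ.symm ⟨u', hu'.1⟩).1 ∈ ICimg G ψ.symm x := ⟨⟨u', hu'.1⟩, hu', rfl⟩
  have h2 : (ψ.symm ⟨u', hu'.1⟩).1 ∈ Wv G v := by rw [hvy]; exact hy h1
  exact ⟨ψ.symm ⟨u', hu'.1⟩, h2, by simp⟩

lemma exists_perm (hULF : UnifLocFinite G) (hext : ∀ v : V, ¬ LinkIsCone G v)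
    (hedge : ∀ t : V, ∃ w, G.Adj t w) (ψ : contactGraph G ≃g contactGraph G) :
    ∃ π : Equiv.Perm V, InducesPerm G ψ π := by
  classical
  have hex : ∀ (χ : contactGraph G ≃g contactGraph G) (v : V), ∃ x, ICimg G χ v = Wv G x :=
    fun χ v => icimg_eq_wv hG hULF hext hedge χ v
  set p : (contactGraph G ≃g contactGraph G) → V → V := fun χ v => (hex χ v).choose with hpdef
  have hp : ∀ χ v, ICimg G χ v = Wv G (p χ v) := fun χ v => (hex χ v).choose_spec
  have hIC : ∀ (χ : contactGraph G ≃g contactGraph G) (v : V),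
      ICimg G χ.symm (p χ v) = Wv G v := by
    intro χ v
    ext u
    constructor
    · rintro ⟨k, hk, rfl⟩
      rw [← hp χ v] at hk
      obtain ⟨k₀, hk₀, hkeq⟩ := hk
      have hkk : χ k₀ = k := Subtype.ext hkeq
      rw [← hkk, RelIso.symm_apply_apply]
      exact hk₀
    · intro hu
      refine ⟨χ ⟨u, hu.1⟩, ?_, by simp⟩
      rw [← hp χ v]
      exact ⟨⟨u, hu.1⟩, hu, rfl⟩
  have haux : ∀ (χ : contactGraph G ≃g contactGraph G) (v : V), p χ.symm (p χ v) = v := by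
    intro χ v
    have h1 := hp χ.symm (p χ v)
    rw [hIC χ v] at h1
    exact (wv_inj hG hext (le_of_eq h1)).symm
  refine ⟨Equiv.mk (p ψ) (p ψ.symm) (fun v => haux ψ v) (fun v => ?_), ?_⟩
  · exact haux ψ.symm v
  · intro v h
    constructor
    · intro hv
      have hmem : (ψ h).1 ∈ ICimg G ψ v := ⟨h, hv, rfl⟩
      rw [hp ψ v] at hmem
      exact hmem
    · intro hv
      have hmem : (ψ h).1 ∈ ICimg G ψ v := by rw [hp ψ v]; exact hv
      obtain ⟨k, hk, hkeq⟩ := hmem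
      have hkk : k = h := ψ.injective (Subtype.ext hkeq)
      rwa [← hkk]

lemma exists_edge_at (hedge : ∃ a b : V, G.Adj a b) (v : V) : ∃ w, G.Adj v w := by
  obtain ⟨a, b, hab⟩ := hedge
  by_cases hva : G.dist v a = 0
  · have : v = a := (hG.1.dist_eq_zero_iff).mp hva
    exact ⟨b, this ▸ hab⟩
  · obtain ⟨q, hq, -⟩ := exists_step hG hva
    exact ⟨q, hq⟩

end cliques
end MedianCore


/-- if `X` is uniformly locally finite, has no extremal vertices and no
hyperplane of `X` has extremal vertices, then `ι : Aut(X) → Aut(𝒞(X))` is an isomorphism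
with inverse `ρ` (induced by the action on maximal cliques). -/
theorem iota_isomorphism (G : SimpleGraph V) (hG : IsMedianGraph G)
    (hULF : UnifLocFinite G) (hext : ∀ v : V, ¬ LinkIsCone G v)
    (hnoext : NoHypExtremalVertex G) :
    -- ι is injective
    (∀ φ ψ : G ≃g G, (∀ h, IsHyperplane G h → hmap G φ h = hmap G ψ h) → φ = ψ) ∧
    -- ι is surjective
    (∀ ψ : contactGraph G ≃g contactGraph G,
      ∃ φ : G ≃g G, ∀ h : Hyp G, (ψ h).1 = hmap G φ h.1) ∧
    -- ρ is the inverse of ι: the vertex permutation induced by ψ via maximal cliques is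
    -- a cubical automorphism φ with ι(φ) = ψ
    (∀ (ψ : contactGraph G ≃g contactGraph G) (π : Equiv.Perm V), InducesPerm G ψ π →
      ∃ φ : G ≃g G, (∀ v : V, φ v = π v) ∧ ∀ h : Hyp G, (ψ h).1 = hmap G φ h.1) := by
  classical
  by_cases hE : ∀ a b : V, ¬ G.Adj a b
  · -- degenerate case : no edges, hence (by connectedness) a single vertex
    have hsing : ∀ a b : V, a = b := by
      intro a b
      obtain ⟨w⟩ := hG.1.preconnected a b
      cases w with
      | nil => rfl
      | cons h _ => exact absurd h (hE _ _)
    have hnohyp : ∀ h : Hyp G, False := by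
      rintro ⟨h, e, he, -⟩
      exact hE _ _ he
    refine ⟨?_, ?_, ?_⟩
    · intro φ ψ _
      ext v
      exact hsing _ _
    · intro ψ
      exact ⟨RelIso.refl G.Adj, fun h => (hnohyp h).elim⟩
    · intro ψ π hind
      exact ⟨RelIso.mk π (by
        intro a b
        exact ⟨fun h => absurd h (hE _ _), fun h => absurd h (hE _ _)⟩),
        fun v => rfl, fun h => (hnohyp h).elim⟩
  · -- main case
    push_neg at hE
    obtain ⟨a0, b0, hab0⟩ := hE
    have hedge : ∀ t : V, ∃ w, G.Adj t w := MedianCore.exists_edge_at hG ⟨a0, b0, hab0⟩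
    refine ⟨MedianCore.iota_injective hG hext, ?_,
      fun ψ π hind => MedianCore.induces_phi hG hnoext ψ π hind⟩
    intro ψ
    obtain ⟨π, hind⟩ := MedianCore.exists_perm hG hULF hext hedge ψ
    obtain ⟨φ, -, hφ⟩ := MedianCore.induces_phi hG hnoext ψ π hind
    exact ⟨φ, hφ⟩
end
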